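/- arXiv:1611.07267 — 6 statements merged into one kernel-verified Lean document; each statement's English description precedes it below -/
import Mathlib

section
/- If X is a Hausdorff topological space in which every discrete subset is contained in a Lindelöf subspace, and X is first-countable (character at most ℵ₀), then the hereditary Lindelöf degree of X is at most 2^ℵ₀; in particular, every right-separated subset of X has cardinality at most the continuum. -/
open Cardinal Set Topology

universe u

/-- A subset `D` is discrete (as a subspace): every point of `D` has an open
neighbourhood meeting `D` only in that point. -/
def IsDiscreteSubset {X : Type u} [TopologicalSpace X] (D : Set X) : Prop :=
  ∀ x ∈ D, ∃ U : Set X, IsOpen U ∧ U ∩ D = {x}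

/-- `X` is almost discretely Lindelöf: every discrete subset is contained in a
Lindelöf subspace. -/
def AlmostDiscretelyLindelof (X : Type u) [TopologicalSpace X] : Prop :=
  ∀ D : Set X, IsDiscreteSubset D → ∃ L : Set X, IsLindelof L ∧ D ⊆ L

/-- The character of `X` is at most `κ`: every point has an open neighbourhood
base of cardinality at most `κ`. -/
def HasCharacterLE (X : Type u) [TopologicalSpace X] (κ : Cardinal.{u}) : Prop :=
  ∀ x : X, ∃ B : Set (Set X), #B ≤ κ ∧ (∀ U ∈ B, IsOpen U ∧ x ∈ U) ∧
    ∀ V ∈ nhds x, ∃ U ∈ B, U ⊆ V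

/-- `R` is right-separated: it carries a well-order in which each point has a
neighbourhood avoiding all strictly later points (initial segments are open). -/
def RightSeparated {X : Type u} [TopologicalSpace X] (R : Set X) : Prop :=
  ∃ r : R → R → Prop, IsWellOrder R r ∧
    ∀ a : R, ∃ U : Set X, IsOpen U ∧ (a : X) ∈ U ∧ ∀ b : R, (b : X) ∈ U → ¬ r a b

/-- `R` is left-separated: it carries a well-order in which each point has a
neighbourhood avoiding all strictly earlier points (initial segments are closed). -/
def LeftSeparated {X : Type u} [TopologicalSpace X] (R : Set X) : Prop :=
  ∃ r : R → R → Prop, IsWellOrder R r ∧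
    ∀ a : R, ∃ U : Set X, IsOpen U ∧ (a : X) ∈ U ∧ ∀ b : R, (b : X) ∈ U → ¬ r b a

/-- The θ-closure operator: `x ∈ thetaCl A` iff the closure of every open
neighbourhood of `x` meets `A`. -/
def thetaCl {X : Type u} [TopologicalSpace X] (A : Set X) : Set X :=
  {x | ∀ U : Set X, IsOpen U → x ∈ U → (closure U ∩ A).Nonempty}

/-- `A` is θ-closed if it coincides with its θ-closure operator value. -/
def IsThetaClosed {X : Type u} [TopologicalSpace X] (A : Set X) : Prop :=
  thetaCl A = A

/-- `[A]_θ`, the smallest θ-closed set containing `A`. -/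
def thetaClosure {X : Type u} [TopologicalSpace X] (A : Set X) : Set X :=
  ⋂₀ {B : Set X | A ⊆ B ∧ IsThetaClosed B}

/-- A (well-ordered) sequence is free if at every cut the closures of the two
pieces are disjoint. -/
def IsFreeSeq {X : Type u} [TopologicalSpace X] {ι : Type u} [LinearOrder ι]
    (f : ι → X) : Prop :=
  ∀ i : ι, closure (f '' {j | j < i}) ∩ closure (f '' {j | i ≤ j}) = ∅

/-- A (well-ordered) sequence is θ-free if at every cut the θ-closure of the
initial piece is disjoint from the closure of the final piece. -/
def IsThetaFreeSeq {X : Type u} [TopologicalSpace X] {ι : Type u} [LinearOrder ι]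
    (f : ι → X) : Prop :=
  ∀ i : ι, thetaClosure (f '' {j | j < i}) ∩ closure (f '' {j | i ≤ j}) = ∅

/-- A cellular family: pairwise disjoint nonempty open sets. -/
def IsCellularFamily {X : Type u} [TopologicalSpace X] (𝒰 : Set (Set X)) : Prop :=
  (∀ U ∈ 𝒰, IsOpen U ∧ U.Nonempty) ∧ 𝒰.PairwiseDisjoint id

/-- `X` is cellular-Lindelöf: every cellular family admits a Lindelöf subspace
meeting each of its members. -/
def CellularLindelof (X : Type u) [TopologicalSpace X] : Prop :=
  ∀ 𝒰 : Set (Set X), IsCellularFamily 𝒰 →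
    ∃ L : Set X, IsLindelof L ∧ ∀ U ∈ 𝒰, (U ∩ L).Nonempty

/-- `lam` is a caliber of `X`: any `lam`-many nonempty open sets include
`lam`-many with a common point. -/
def IsCaliber (X : Type u) [TopologicalSpace X] (lam : Cardinal.{u}) : Prop :=
  ∀ (ι : Type u) (U : ι → Set X), #ι = lam →
    (∀ i, IsOpen (U i) ∧ (U i).Nonempty) →
    ∃ S : Set ι, #S = lam ∧ (⋂ i ∈ S, U i).Nonempty


/-! ### Auxiliary machinery -/

section Aux

open Ordinal Filter

lemma auxBounded {κ : Cardinal.{u}} (hreg : κ.IsRegular) (hκ : ℵ₀ < κ)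
    (g : ℕ → κ.ord.ToType) : ∃ i, ∀ n, g n < i := by
  set e := Ordinal.ToType.mk (o := κ.ord) with he
  have hlt : ∀ n, ((e.symm (g n) : Set.Iio κ.ord) : Ordinal) + 1 < κ.ord := by
    intro n
    rw [Cardinal.lt_ord, Ordinal.card_add, Ordinal.card_one]
    have h1 : ((e.symm (g n) : Set.Iio κ.ord) : Ordinal) < κ.ord := (e.symm (g n)).2
    rw [Cardinal.lt_ord] at h1
    exact Cardinal.add_lt_of_lt hreg.1 h1 (lt_of_lt_of_le Cardinal.one_lt_aleph0 hreg.1)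
  have hsup : (⨆ n, ((e.symm (g n) : Set.Iio κ.ord) : Ordinal) + 1) < κ.ord := by
    apply Ordinal.iSup_lt_ord_lift _ hlt
    rw [Cardinal.mk_nat, Cardinal.lift_aleph0, hreg.cof_eq]
    exact hκ
  refine ⟨e ⟨_, hsup⟩, fun n => ?_⟩
  have h0 : e.symm (g n) < ⟨_, hsup⟩ := by
    apply Subtype.coe_lt_coe.mp
    exact lt_of_lt_of_le (lt_add_one _) (le_ciSup (Ordinal.bddAbove_range _) n)
  have h2 := e.lt_iff_lt.mpr h0
  rwa [e.apply_symm_apply] at h2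

lemma auxCardInitial {κ : Cardinal.{u}} (i : κ.ord.ToType) : #{j // j < i} < κ :=
  mk_Iio_ord_toType i

lemma cardClosureLE {Y : Type u} [TopologicalSpace Y] [T2Space Y]
    [FirstCountableTopology Y] {A : Set Y} (hA : #A ≤ Cardinal.continuum) :
    #(closure A) ≤ Cardinal.continuum := by
  rcases A.eq_empty_or_nonempty with h | h
  · simp [h]
  have key : ∀ x : closure A, ∃ u : ℕ → Y, (∀ n, u n ∈ A) ∧ Tendsto u atTop (nhds (x : Y)) :=
    fun x => mem_closure_iff_seq_limit.mp x.2
  choose u hu hlim using key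
  have hinj : Function.Injective (fun x : closure A => (fun n => (⟨u x n, hu x n⟩ : A))) := by
    intro x y hxy
    have huv : u x = u y := by
      funext n
      exact congrArg Subtype.val (congrFun hxy n)
    apply Subtype.ext
    exact tendsto_nhds_unique (hlim x) (huv ▸ hlim y)
  calc #(closure A) ≤ #(ℕ → A) := Cardinal.mk_le_of_injective hinj
    _ ≤ Cardinal.continuum := by
        rw [Cardinal.mk_arrow]
        simp only [Cardinal.mk_nat, Cardinal.lift_aleph0, Cardinal.lift_id]
        calc Cardinal.lift.{0} #A ^ (ℵ₀ : Cardinal.{u})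
            ≤ Cardinal.continuum ^ (ℵ₀ : Cardinal.{u}) := by
              apply Cardinal.power_le_power_right
              simpa using hA
          _ = Cardinal.continuum := continuum_power_aleph0

open scoped Classical in
noncomputable def pickOut {Y : Type u} (U : Set Y) : Set Y :=
  if h : Uᶜ.Nonempty then {h.choose} else ∅

lemma pickOut_subset {Y : Type u} (U : Set Y) : pickOut U ⊆ Uᶜ := by
  unfold pickOut
  split_ifs with h
  · simpa [Set.singleton_subset_iff] using h.choose_spec
  · simp

lemma pickOut_nonempty {Y : Type u} {U : Set Y} (h : Uᶜ.Nonempty) : (pickOut U).Nonempty := by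
  unfold pickOut
  rw [dif_pos h]
  exact ⟨h.choose, rfl⟩

lemma card_pickOut {Y : Type u} (U : Set Y) : #(pickOut U) ≤ 1 := by
  unfold pickOut
  split_ifs <;> simp

/-- One step in the Arhangel'skii closure construction. -/
noncomputable def astep {Y : Type u} [TopologicalSpace Y] (b : Y → ℕ → Set Y) (S : Set Y) :
    Set Y :=
  closure S ∪ ⋃ v : ℕ → S × ℕ, pickOut (⋃ k, b ((v k).1 : Y) (v k).2)

lemma subset_astep {Y : Type u} [TopologicalSpace Y] (b : Y → ℕ → Set Y) (S : Set Y) :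
    S ⊆ astep b S := subset_closure.trans (Set.subset_union_left)

lemma closure_subset_astep {Y : Type u} [TopologicalSpace Y] (b : Y → ℕ → Set Y) (S : Set Y) :
    closure S ⊆ astep b S := Set.subset_union_left

lemma card_astep {Y : Type u} [TopologicalSpace Y] [T2Space Y] [FirstCountableTopology Y]
    (b : Y → ℕ → Set Y) {S : Set Y} (hS : #S ≤ Cardinal.continuum) :
    #(astep b S) ≤ Cardinal.continuum := by
  have h1 : #(closure S) ≤ Cardinal.continuum := cardClosureLE hS
  have hST : #(↥S × ℕ) ≤ Cardinal.continuum := by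
    rw [Cardinal.mk_prod]
    simp only [Cardinal.mk_nat, Cardinal.lift_aleph0, Cardinal.lift_id]
    calc Cardinal.lift.{0} #S * (ℵ₀ : Cardinal.{u})
        ≤ Cardinal.continuum * Cardinal.continuum := by
          apply mul_le_mul'
          · simpa using hS
          · exact aleph0_le_continuum
      _ = Cardinal.continuum := Cardinal.mul_eq_self aleph0_le_continuum
  have hfun : #(ℕ → ↥S × ℕ) ≤ Cardinal.continuum := by
    rw [Cardinal.mk_arrow]
    simp only [Cardinal.mk_nat, Cardinal.lift_aleph0, Cardinal.lift_id]
    calc Cardinal.lift.{0} #(↥S × ℕ) ^ (ℵ₀ : Cardinal.{u})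
        ≤ Cardinal.continuum ^ (ℵ₀ : Cardinal.{u}) := by
          apply Cardinal.power_le_power_right
          simpa using hST
      _ = Cardinal.continuum := continuum_power_aleph0
  have h2 : #(⋃ v : ℕ → S × ℕ, pickOut (⋃ k, b ((v k).1 : Y) (v k).2)) ≤ Cardinal.continuum := by
    calc #(⋃ v : ℕ → S × ℕ, pickOut (⋃ k, b ((v k).1 : Y) (v k).2))
        ≤ #(ℕ → ↥S × ℕ) * ⨆ v : ℕ → S × ℕ, #(pickOut (⋃ k, b ((v k).1 : Y) (v k).2)) :=
          Cardinal.mk_iUnion_le _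
      _ ≤ Cardinal.continuum * 1 := by
          apply mul_le_mul' hfun
          exact ciSup_le' fun v => card_pickOut _
      _ ≤ Cardinal.continuum := by simp
  calc #(astep b S) ≤ #(closure S) + _ := Cardinal.mk_union_le _ _
    _ ≤ Cardinal.continuum + Cardinal.continuum := add_le_add h1 h2
    _ = Cardinal.continuum := by simp

noncomputable def aSeq {Y : Type u} [TopologicalSpace Y] {ι : Type u} [LinearOrder ι]
    [WellFoundedLT ι] (b : Y → ℕ → Set Y) (y₀ : Y) : ι → Set Y :=
  (IsWellFounded.wf (r := ((· < ·) : ι → ι → Prop))).fix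
    (fun i ih => astep b ({y₀} ∪ ⋃ j : {j // j < i}, ih j j.2))

lemma aSeq_eq {Y : Type u} [TopologicalSpace Y] {ι : Type u} [LinearOrder ι]
    [WellFoundedLT ι] (b : Y → ℕ → Set Y) (y₀ : Y) (i : ι) :
    aSeq b y₀ i = astep b ({y₀} ∪ ⋃ j : {j // j < i}, aSeq b y₀ j.1) :=
  WellFounded.fix_eq _ _ _

/-- Arhangel'skii's theorem for first-countable Hausdorff Lindelöf spaces. -/
theorem arhangelskii (Y : Type u) [TopologicalSpace Y] [T2Space Y] [FirstCountableTopology Y]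
    [LindelofSpace Y] : #Y ≤ Cardinal.continuum := by
  by_cases hY : Nonempty Y
  case neg =>
    have : IsEmpty Y := not_nonempty_iff.mp hY
    simp [Cardinal.mk_eq_zero Y]
  obtain ⟨y₀⟩ := hY
  -- countable open neighbourhood bases
  have hbase : ∀ x : Y, ∃ B : ℕ → Set Y, (∀ n, IsOpen (B n) ∧ x ∈ B n) ∧
      ∀ V ∈ nhds x, ∃ n, B n ⊆ V := by
    intro x
    obtain ⟨u, hu⟩ := (nhds x).exists_antitone_basis
    refine ⟨fun n => interior (u n), fun n => ⟨isOpen_interior, ?_⟩, fun V hV => ?_⟩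
    · exact mem_interior_iff_mem_nhds.2 (hu.1.mem_of_mem trivial)
    · obtain ⟨n, -, hn⟩ := hu.1.mem_iff.mp hV
      exact ⟨n, interior_subset.trans hn⟩
  choose b hb1 hb2 using hbase
  set ι := ((aleph 1 : Cardinal.{u}).ord).ToType with hι
  set A : ι → Set Y := aSeq b y₀ with hA
  have hcard : ∀ i : ι, #(A i) ≤ Cardinal.continuum := by
    intro i
    induction i using WellFoundedLT.induction with
    | ind i ih =>
      rw [hA, aSeq_eq]
      apply card_astep
      calc #({y₀} ∪ ⋃ j : {j // j < i}, aSeq b y₀ j.1 : Set Y)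
          ≤ #({y₀} : Set Y) + #(⋃ j : {j // j < i}, aSeq b y₀ j.1) := Cardinal.mk_union_le _ _
        _ ≤ 1 + #{j // j < i} * ⨆ j : {j // j < i}, #(aSeq b y₀ j.1) := by
            apply add_le_add
            · simp
            · exact Cardinal.mk_iUnion_le _
        _ ≤ 1 + Cardinal.continuum * Cardinal.continuum := by
            apply add_le_add le_rfl
            apply mul_le_mul'
            · calc #{j // j < i} ≤ #ι := Cardinal.mk_subtype_le _
                _ = aleph 1 := by rw [hι, mk_toType, Cardinal.card_ord]
                _ ≤ Cardinal.continuum := aleph_one_le_continuum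
            · exact ciSup_le' fun j => ih j.1 j.2
        _ ≤ Cardinal.continuum := by
            rw [Cardinal.mul_eq_self aleph0_le_continuum]
            exact Cardinal.add_le_of_le aleph0_le_continuum
              (Cardinal.one_lt_aleph0.le.trans aleph0_le_continuum) le_rfl
  set F := ⋃ i, A i with hF
  have hsubF : ∀ i, A i ⊆ F := fun i => Set.subset_iUnion A i
  have hargsub : ∀ i : ι, ({y₀} ∪ ⋃ j : {j // j < i}, A j.1 : Set Y) ⊆ A i := by
    intro i
    rw [hA, aSeq_eq]
    exact subset_astep _ _
  have hclos : ∀ i : ι, closure ({y₀} ∪ ⋃ j : {j // j < i}, A j.1 : Set Y) ⊆ A i := by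
    intro i
    rw [hA, aSeq_eq]
    exact closure_subset_astep _ _
  have hbound : ∀ g : ℕ → ι, ∃ i : ι, ∀ n, g n < i := fun g =>
    auxBounded isRegular_aleph_one (aleph0_lt_aleph_one) g
  have hFclosed : IsClosed F := by
    apply isClosed_of_closure_subset
    intro x hx
    obtain ⟨v, hvF, hvlim⟩ := mem_closure_iff_seq_limit.mp hx
    choose g hg using fun n => Set.mem_iUnion.mp (hvF n)
    obtain ⟨i, hi⟩ := hbound g
    have hx2 : x ∈ closure ({y₀} ∪ ⋃ j : {j // j < i}, A j.1 : Set Y) := by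
      apply mem_closure_of_tendsto hvlim
      filter_upwards with n
      exact Or.inr (Set.mem_iUnion.2 ⟨⟨g n, hi n⟩, hg n⟩)
    exact hsubF i (hclos i hx2)
  have hFuniv : F = Set.univ := by
    by_contra hne
    obtain ⟨z, hz⟩ := (Set.ne_univ_iff_exists_notMem F).mp hne
    have hn : ∀ x : F, ∃ n, z ∉ b x n := by
      intro x
      have hxz : ({z}ᶜ : Set Y) ∈ nhds (x : Y) := by
        apply IsOpen.mem_nhds isOpen_compl_singleton
        simp only [Set.mem_compl_iff, Set.mem_singleton_iff]
        exact fun e => hz (e ▸ x.2)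
      obtain ⟨n, hn⟩ := hb2 x _ hxz
      exact ⟨n, fun hzb => (hn hzb) rfl⟩
    choose n hnz using hn
    have hFl : IsLindelof F := isLindelof_univ.of_isClosed_subset hFclosed (Set.subset_univ F)
    have hcover : F ⊆ ⋃ x : F, b x (n x) := fun y hy =>
      Set.mem_iUnion.2 ⟨⟨y, hy⟩, (hb1 y (n ⟨y, hy⟩)).2⟩
    obtain ⟨t, htc, htcov⟩ := hFl.elim_countable_subcover (fun x : F => b x (n x))
      (fun x => (hb1 x _).1) hcover
    have hιne : Nonempty ι := by
      rw [hι, Ordinal.toType_nonempty_iff_ne_zero, ne_eq, Cardinal.ord_eq_zero]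
      exact (Cardinal.aleph_pos 1).ne'
    obtain ⟨i₀⟩ := hιne
    have hy₀F : y₀ ∈ F := hsubF i₀ (hargsub i₀ (Or.inl rfl))
    have htne : t.Nonempty := by
      rcases t.eq_empty_or_nonempty with h | h
      · exfalso
        have := htcov hy₀F
        simp [h] at this
      · exact h
    obtain ⟨e, he⟩ := htc.exists_eq_range htne
    choose g hg using fun k => Set.mem_iUnion.mp (e k).2
    obtain ⟨i, hi⟩ := hbound g
    set S : Set Y := {y₀} ∪ ⋃ j : {j // j < i}, A j.1 with hS
    have heS : ∀ k, ((e k : F) : Y) ∈ S := fun k =>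
      Or.inr (Set.mem_iUnion.2 ⟨⟨g k, hi k⟩, hg k⟩)
    set v : ℕ → ↥S × ℕ := fun k => (⟨(e k : F), heS k⟩, n (e k)) with hv
    set U := ⋃ k, b ((v k).1 : Y) (v k).2 with hU
    have hzU : z ∉ U := by
      rw [hU]
      simp only [Set.mem_iUnion, not_exists]
      intro k
      exact hnz (e k)
    obtain ⟨w, hw⟩ := pickOut_nonempty (U := U) ⟨z, hzU⟩
    have hwA : w ∈ A i := by
      have : A i = astep b S := by rw [hA, aSeq_eq, hS]
      rw [this, astep]
      exact Or.inr (Set.mem_iUnion.2 ⟨v, hw⟩)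
    have hwF : w ∈ F := hsubF i hwA
    have hwU : w ∈ U := by
      have h1 := htcov hwF
      rw [he] at h1
      simp only [Set.mem_iUnion] at h1
      obtain ⟨x, ⟨k, hk⟩, hx⟩ := h1
      rw [hU]
      apply Set.mem_iUnion.2 ⟨k, ?_⟩
      rw [hv]
      simpa [hk] using hx
    exact (pickOut_subset U hw) hwU
  calc #Y = #(Set.univ : Set Y) := (Cardinal.mk_univ).symm
    _ = #F := by rw [hFuniv]
    _ ≤ #ι * ⨆ i, #(A i) := Cardinal.mk_iUnion_le _
    _ ≤ Cardinal.continuum * Cardinal.continuum := by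
        apply mul_le_mul'
        · rw [hι, mk_toType, Cardinal.card_ord]
          exact aleph_one_le_continuum
        · exact ciSup_le' hcard
    _ = Cardinal.continuum := Cardinal.mul_eq_self aleph0_le_continuum

lemma card_isLindelof {X : Type u} [TopologicalSpace X] [T2Space X] [FirstCountableTopology X]
    {L : Set X} (hL : IsLindelof L) : #L ≤ Cardinal.continuum := by
  haveI : LindelofSpace ↥L := isLindelof_iff_LindelofSpace.mp hL
  exact arhangelskii ↥L

theorem exists_wf_rec {ι : Type u} [LinearOrder ι] [WellFoundedLT ι] {Y : Type v}
    (P : ∀ i : ι, ({j // j < i} → Y) → Y → Prop)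
    (h : ∀ i (f : {j // j < i} → Y), ∃ y, P i f y) :
    ∃ f : ι → Y, ∀ i, P i (fun j => f j.1) (f i) := by
  let f : ι → Y := (IsWellFounded.wf (r := ((· < ·) : ι → ι → Prop))).fix
    (fun i ih => (h i (fun j => ih j.1 j.2)).choose)
  have hf : ∀ i, f i = (h i (fun j => f j.1)).choose := fun i => WellFounded.fix_eq _ _ _
  refine ⟨f, fun i => ?_⟩
  have := (h i (fun j => f j.1)).choose_spec
  rwa [← hf i] at this

lemma rightSeparated_card_le {X : Type u} [TopologicalSpace X] [T2Space X]
    [FirstCountableTopology X] (hADL : AlmostDiscretelyLindelof X) (R : Set X)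
    (hR : RightSeparated R) : #R ≤ Cardinal.continuum := by
  by_contra hcon
  replace hcon : Cardinal.continuum < #R := not_le.mp hcon
  obtain ⟨r, hr, hw⟩ := hR
  haveI : IsWellOrder ↥R r := hr
  have hwf : WellFounded r := IsWellFounded.wf
  set κ : Cardinal.{u} := Order.succ Cardinal.continuum with hκ
  set ι := κ.ord.ToType with hι
  set P : ∀ i : ι, ({j // j < i} → ↥R) → ↥R → Prop := fun i f a =>
    ((a : X) ∉ closure (Subtype.val '' Set.range f)) ∧
    ∀ b : ↥R, ((b : X) ∉ closure (Subtype.val '' Set.range f)) → ¬ r b a with hP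
  have hex : ∀ i (f : {j // j < i} → ↥R), ∃ a, P i f a := by
    intro i f
    set C : Set X := closure (Subtype.val '' Set.range f) with hC
    set T : Set ↥R := {b | (b : X) ∉ C} with hT
    have hTne : T.Nonempty := by
      by_contra hTe
      rw [Set.not_nonempty_iff_eq_empty] at hTe
      have hsub : R ⊆ C := by
        intro x hx
        by_contra hxC
        have : (⟨x, hx⟩ : ↥R) ∈ T := hxC
        rw [hTe] at this
        exact this
      have h1 : #R ≤ #C := Cardinal.mk_le_mk_of_subset hsub
      have h2 : #C ≤ Cardinal.continuum := by
        apply cardClosureLE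
        calc #(Subtype.val '' Set.range f) ≤ #(Set.range f) := Cardinal.mk_image_le
          _ ≤ #{j // j < i} := Cardinal.mk_range_le
          _ ≤ Cardinal.continuum := by
              exact Order.lt_succ_iff.mp (auxCardInitial (κ := κ) i)
      exact absurd (h1.trans h2) (not_le.mpr hcon)
    refine ⟨hwf.min T hTne, hwf.min_mem T hTne, fun b hb => hwf.not_lt_min T hb⟩
  obtain ⟨f, hf⟩ := exists_wf_rec P hex
  set prev : ι → Set X := fun i => Subtype.val '' Set.range (fun j : {j // j < i} => f j.1)
    with hprev
  have hprevmono : ∀ {i i' : ι}, i ≤ i' → prev i ⊆ prev i' := by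
    intro i i' hii
    rintro x ⟨a, ⟨j, rfl⟩, rfl⟩
    exact ⟨f j.1, ⟨⟨j.1, lt_of_lt_of_le j.2 hii⟩, rfl⟩, rfl⟩
  have hmem : ∀ {i i' : ι}, i < i' → ((f i : X)) ∈ prev i' := by
    intro i i' hii
    exact ⟨f i, ⟨⟨i, hii⟩, rfl⟩, rfl⟩
  have hnotin : ∀ i : ι, (f i : X) ∉ closure (prev i) := fun i => (hf i).1
  have hinc : ∀ {i i' : ι}, i < i' → r (f i) (f i') := by
    intro i i' hii
    have h1 : (f i' : X) ∉ closure (prev i) := fun hmem' =>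
      hnotin i' (closure_mono (hprevmono hii.le) hmem')
    have h2 : ¬ r (f i') (f i) := (hf i).2 (f i') h1
    have h3 : f i ≠ f i' := by
      intro he
      exact hnotin i' (he ▸ subset_closure (hmem hii))
    rcases trichotomous_of r (f i) (f i') with h | h | h
    · exact h
    · exact absurd h h3
    · exact absurd h h2
  have hinj : Function.Injective f := by
    intro i i' he
    rcases lt_trichotomy i i' with h | h | h
    · exact absurd (he ▸ hinc h) (irrefl_of r _)
    · exact h
    · exact absurd (he ▸ hinc h) (irrefl_of r _)
  set D : Set X := Subtype.val '' Set.range f with hD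
  have hdisc : IsDiscreteSubset D := by
    rintro x ⟨a, ⟨i, rfl⟩, rfl⟩
    obtain ⟨U, hUo, hUm, hUr⟩ := hw (f i)
    refine ⟨U ∩ (closure (prev i))ᶜ, hUo.inter isClosed_closure.isOpen_compl, ?_⟩
    ext y
    constructor
    · rintro ⟨⟨hyU, hyC⟩, b, ⟨i', rfl⟩, rfl⟩
      rcases lt_trichotomy i i' with h | h | h
      · exact absurd (hinc h) (hUr (f i') hyU)
      · rw [h]; rfl
      · exact absurd (subset_closure (hmem h)) hyC
    · rintro rfl
      exact ⟨⟨hUm, hnotin i⟩, f i, ⟨i, rfl⟩, rfl⟩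
  obtain ⟨L, hL, hDL⟩ := hADL D hdisc
  have hcard : #D ≤ Cardinal.continuum :=
    (Cardinal.mk_le_mk_of_subset hDL).trans (card_isLindelof hL)
  have hDbig : #D = κ := by
    have h1 : D = Set.range (fun i => (f i : X)) := by
      rw [hD, ← Set.range_comp]; rfl
    rw [h1, Cardinal.mk_range_eq _ (fun i i' he => hinj (Subtype.ext he))]
    rw [hι, mk_toType, Cardinal.card_ord]
  rw [hDbig, hκ] at hcard
  exact absurd hcard (not_le.mpr (Order.lt_succ _))

lemma subcover_of_rs {X : Type u} [TopologicalSpace X]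
    (key : ∀ R : Set X, RightSeparated R → #R ≤ Cardinal.continuum)
    (Y : Set X) (𝒰 : Set (Set X)) (hopen : ∀ U ∈ 𝒰, IsOpen U) (hcov : Y ⊆ ⋃₀ 𝒰) :
    ∃ 𝒱 ⊆ 𝒰, #𝒱 ≤ Cardinal.continuum ∧ Y ⊆ ⋃₀ 𝒱 := by
  rcases Y.eq_empty_or_nonempty with hYe | ⟨y₀, hy₀⟩
  · exact ⟨∅, Set.empty_subset _, by simp [hYe]⟩
  by_contra hcon
  push_neg at hcon
  set κ : Cardinal.{u} := Order.succ Cardinal.continuum with hκ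
  set ι := κ.ord.ToType with hι
  set P : ∀ i : ι, ({j // j < i} → X × Set X) → X × Set X → Prop := fun i f p =>
    (∀ j : {j // j < i}, (f j).2 ∈ 𝒰) →
      (p.1 ∈ Y ∧ p.2 ∈ 𝒰 ∧ p.1 ∈ p.2 ∧ ∀ j : {j // j < i}, p.1 ∉ (f j).2) with hP
  have hex : ∀ i (f : {j // j < i} → X × Set X), ∃ p, P i f p := by
    intro i f
    by_cases hall : ∀ j : {j // j < i}, (f j).2 ∈ 𝒰
    · set 𝒱 : Set (Set X) := Set.range (fun j : {j // j < i} => (f j).2) with h𝒱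
      have h1 : 𝒱 ⊆ 𝒰 := by rintro V ⟨j, rfl⟩; exact hall j
      have h2 : #𝒱 ≤ Cardinal.continuum := by
        calc #𝒱 ≤ #{j // j < i} := Cardinal.mk_range_le
          _ ≤ Cardinal.continuum := Order.lt_succ_iff.mp (auxCardInitial (κ := κ) i)
      have h3 := hcon 𝒱 h1 h2
      rw [Set.not_subset] at h3
      obtain ⟨y, hyY, hyV⟩ := h3
      obtain ⟨U, hU𝒰, hyU⟩ := hcov hyY
      refine ⟨(y, U), fun _ => ⟨hyY, hU𝒰, hyU, fun j hj => ?_⟩⟩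
      exact hyV ⟨(f j).2, ⟨j, rfl⟩, hj⟩
    · exact ⟨(y₀, ∅), fun h => absurd h hall⟩
  obtain ⟨f, hf⟩ := exists_wf_rec P hex
  have hgood : ∀ i : ι, (f i).1 ∈ Y ∧ (f i).2 ∈ 𝒰 ∧ (f i).1 ∈ (f i).2 ∧
      ∀ j : {j // j < i}, (f i).1 ∉ (f j.1).2 := by
    intro i
    induction i using WellFoundedLT.induction with
    | ind i ih => exact hf i (fun j => (ih j.1 j.2).2.1)
  set g : ι → X := fun i => (f i).1 with hg
  have hinj : Function.Injective g := by
    intro i i' he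
    by_contra hne
    rcases lt_or_gt_of_ne hne with h | h
    · apply (hgood i').2.2.2 ⟨i, h⟩
      have h1 : (f i).1 ∈ (f i).2 := (hgood i).2.2.1
      rwa [show (f i).1 = (f i').1 from he] at h1
    · apply (hgood i).2.2.2 ⟨i', h⟩
      have h1 : (f i').1 ∈ (f i').2 := (hgood i').2.2.1
      rwa [show (f i').1 = (f i).1 from he.symm] at h1
  set R : Set X := Set.range g with hR
  set e : ι ≃ ↥R := Equiv.ofInjective g hinj with he
  have hcoe : ∀ i : ι, ((e i : X)) = g i := fun i => rfl
  set r : ↥R → ↥R → Prop := fun a b => e.symm a < e.symm b with hr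
  have hwo : IsWellOrder ↥R r := by
    let emb : r ↪r ((· < ·) : ι → ι → Prop) := ⟨⟨e.symm, e.symm.injective⟩, Iff.rfl⟩
    exact @RelEmbedding.isWellOrder _ _ _ _ emb isWellOrder_lt
  have hrs : RightSeparated R := by
    refine ⟨r, hwo, fun a => ?_⟩
    set i := e.symm a with hi
    refine ⟨(f i).2, hopen _ (hgood i).2.1, ?_, ?_⟩
    · have : (a : X) = g i := by rw [hi, ← hcoe, e.apply_symm_apply]
      rw [this]
      exact (hgood i).2.2.1
    · intro b hb hrab
      have hib : i < e.symm b := hrab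
      have : (b : X) = g (e.symm b) := by rw [← hcoe, e.apply_symm_apply]
      rw [this] at hb
      exact (hgood (e.symm b)).2.2.2 ⟨i, hib⟩ hb
  have hcard := key R hrs
  have hRbig : #R = κ := by
    rw [hR, Cardinal.mk_range_eq _ hinj, hι, mk_toType, Cardinal.card_ord]
  rw [hRbig] at hcard
  exact absurd hcard (not_le.mpr (Order.lt_succ _))

end Aux

/-- an almost discretely Lindelöf first-countable Hausdorff space has
hereditary Lindelöf degree at most `𝔠`; in particular every right-separated subset
has cardinality at most the continuum. -/
theorem stmt0 {X : Type u} [TopologicalSpace X] [T2Space X]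
    [FirstCountableTopology X] (hADL : AlmostDiscretelyLindelof X) :
    (∀ (Y : Set X) (𝒰 : Set (Set X)), (∀ U ∈ 𝒰, IsOpen U) → Y ⊆ ⋃₀ 𝒰 →
      ∃ 𝒱 ⊆ 𝒰, #𝒱 ≤ Cardinal.continuum ∧ Y ⊆ ⋃₀ 𝒱) ∧
    (∀ R : Set X, RightSeparated R → #R ≤ Cardinal.continuum) := by
  have key : ∀ R : Set X, RightSeparated R → #R ≤ Cardinal.continuum :=
    fun R hR => rightSeparated_card_le hADL R hR
  exact ⟨fun Y 𝒰 hopen hcov => subcover_of_rs key Y 𝒰 hopen hcov, key⟩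
end

section
/- Let X be an almost discretely Lindelöf first-countable Hausdorff space and let A ⊆ X be a θ-closed set. Then A is the intersection of at most 2^ℵ₀ many open subsets of X. -/
open Cardinal Set Topology

universe u

namespace StmtOneAux

open Filter Ordinal

variable {X : Type u} [TopologicalSpace X]

/-- In a first-countable Hausdorff space, the closure of a set of size at most `𝔠`
has size at most `𝔠`. -/
lemma mk_closure_le_continuum [FirstCountableTopology X] [T2Space X] {S : Set X}
    (hS : #S ≤ Cardinal.continuum) : #(closure S) ≤ Cardinal.continuum := by
  have hx : ∀ x : closure S, ∃ u : ℕ → X, (∀ n, u n ∈ S) ∧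
      Filter.Tendsto u Filter.atTop (nhds (x : X)) := fun x =>
    mem_closure_iff_seq_limit.mp x.2
  choose u hu hlim using hx
  have hinj : Function.Injective (fun x : closure S => (fun n => (⟨u x n, hu x n⟩ : S))) := by
    intro x y hxy
    have huv : u x = u y := funext fun n => congrArg Subtype.val (congrFun hxy n)
    exact Subtype.ext (tendsto_nhds_unique (hlim x) (huv ▸ hlim y))
  calc #(closure S) ≤ #(ℕ → S) := Cardinal.mk_le_of_injective hinj
    _ = #S ^ (ℵ₀ : Cardinal) := by rw [Cardinal.mk_arrow]; simp
    _ ≤ Cardinal.continuum ^ (ℵ₀ : Cardinal) := Cardinal.power_le_power_right hS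
    _ = Cardinal.continuum := Cardinal.continuum_power_aleph0

omit [TopologicalSpace X] in
lemma mk_seqset_le {S : Set X} (hS : #S ≤ Cardinal.continuum) :
    #({f : ℕ → X × ℕ | ∀ n, (f n).1 ∈ S} : Set (ℕ → X × ℕ)) ≤ Cardinal.continuum := by
  have hinj : Function.Injective
      (fun F : ({f : ℕ → X × ℕ | ∀ n, (f n).1 ∈ S} : Set (ℕ → X × ℕ)) =>
        (fun n => ((⟨(F.1 n).1, F.2 n⟩ : S), (F.1 n).2) : ℕ → S × ℕ)) := by
    intro F G h
    refine Subtype.ext (funext fun n => ?_)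
    have h1 := congrFun h n
    have e1 : ((F.1 n).1 : X) = (G.1 n).1 := congrArg (fun p => (p.1 : X)) h1
    have e2 : (F.1 n).2 = (G.1 n).2 := congrArg (fun p => p.2) h1
    exact Prod.ext e1 e2
  calc #({f : ℕ → X × ℕ | ∀ n, (f n).1 ∈ S} : Set (ℕ → X × ℕ))
      ≤ #(ℕ → S × ℕ) := Cardinal.mk_le_of_injective hinj
    _ = #(S × ℕ) ^ (ℵ₀ : Cardinal) := by rw [Cardinal.mk_arrow]; simp
    _ ≤ Cardinal.continuum ^ (ℵ₀ : Cardinal) := by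
        refine Cardinal.power_le_power_right ?_
        rw [Cardinal.mk_prod]
        simp only [Cardinal.lift_uzero, Cardinal.mk_nat, Cardinal.lift_aleph0]
        calc #S * ℵ₀ ≤ Cardinal.continuum * Cardinal.continuum :=
              mul_le_mul' hS Cardinal.aleph0_le_continuum
          _ = Cardinal.continuum := Cardinal.continuum_mul_self
    _ = Cardinal.continuum := Cardinal.continuum_power_aleph0

omit [TopologicalSpace X] in
lemma bound_seq {κ : Cardinal.{u}} (hreg : κ.IsRegular) (hgt : (ℵ₀ : Cardinal) < κ)
    (st : ℕ → κ.ord.ToType) : ∃ η : κ.ord.ToType, ∀ n, st n < η := by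
  haveI hwo : IsWellOrder κ.ord.ToType (· < ·) := isWellOrder_lt
  have htype : type (α := κ.ord.ToType) (· < ·) = κ.ord := type_toType _
  have hlim : Order.IsSuccLimit κ.ord := Cardinal.isSuccLimit_ord hgt.le
  have h1 : ∀ n, typein (α := κ.ord.ToType) (· < ·) (st n) + 1 < κ.ord := fun n => by
    rw [add_one_eq_succ]
    exact hlim.succ_lt (typein_lt_self _)
  have h2 : (⨆ n, typein (α := κ.ord.ToType) (· < ·) (st n) + 1) < κ.ord := by
    refine Ordinal.iSup_lt_ord_lift ?_ h1
    rw [hreg.cof_eq]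
    simpa using hgt
  have h2' : (⨆ n, typein (α := κ.ord.ToType) (· < ·) (st n) + 1)
      < type (α := κ.ord.ToType) (· < ·) := lt_of_lt_of_le h2 (le_of_eq htype.symm)
  refine ⟨enum (α := κ.ord.ToType) (· < ·) ⟨_, h2'⟩, fun n => ?_⟩
  have hle : typein (α := κ.ord.ToType) (· < ·) (st n) + 1
      ≤ ⨆ n, typein (α := κ.ord.ToType) (· < ·) (st n) + 1 :=
    Ordinal.le_iSup (fun n => typein (α := κ.ord.ToType) (· < ·) (st n) + 1) n
  have hlt : typein (α := κ.ord.ToType) (· < ·) (st n)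
      < typein (α := κ.ord.ToType) (· < ·)
        (enum (α := κ.ord.ToType) (· < ·) ⟨_, h2'⟩) := by
    rw [typein_enum]
    exact lt_of_lt_of_le (by rw [add_one_eq_succ]; exact Order.lt_succ _) hle
  exact (typein_lt_typein _).1 hlt

/-- Arhangelskii's theorem for Lindelöf subspaces of first-countable Hausdorff
spaces: such a subspace has cardinality at most the continuum. -/
lemma isLindelof_card_le [FirstCountableTopology X] [T2Space X] {L : Set X}
    (hLin : IsLindelof L) : #L ≤ Cardinal.continuum := by
  classical
  rcases L.eq_empty_or_nonempty with rfl | ⟨z₀, hz₀⟩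
  · simp
  -- countable open neighbourhood bases
  have hBex : ∀ x : X, ∃ B : ℕ → Set X, (∀ n, IsOpen (B n)) ∧ (∀ n, x ∈ B n) ∧
      ∀ V ∈ nhds x, ∃ n, B n ⊆ V := by
    intro x
    obtain ⟨b, hb⟩ := (nhds x).exists_antitone_basis
    refine ⟨fun n => interior (b n), fun n => isOpen_interior,
      fun n => mem_interior_iff_mem_nhds.2 (hb.mem n), fun V hV => ?_⟩
    obtain ⟨n, -, hn⟩ := hb.toHasBasis.mem_iff.1 hV
    exact ⟨n, interior_subset.trans hn⟩
  choose B hBopen hBmem hBbase using hBex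
  -- the "escaping point" operator
  have hΦex : ∀ f : ℕ → X × ℕ, ∃ z : X, z ∈ L ∧
      ((L \ ⋃ n, B (f n).1 (f n).2).Nonempty → z ∉ ⋃ n, B (f n).1 (f n).2) := by
    intro f
    by_cases h : (L \ ⋃ n, B (f n).1 (f n).2).Nonempty
    · exact ⟨h.choose, h.choose_spec.1, fun _ => h.choose_spec.2⟩
    · exact ⟨z₀, hz₀, fun h' => absurd h' h⟩
  choose Φ hΦL hΦnot using hΦex
  -- the closing-off hierarchy of length ω₁
  haveI hwo : IsWellOrder (ℵ₁ : Cardinal.{u}).ord.ToType (· < ·) := isWellOrder_lt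
  have wfI : WellFounded ((· < ·) : (ℵ₁ : Cardinal.{u}).ord.ToType →
      (ℵ₁ : Cardinal.{u}).ord.ToType → Prop) := wellFounded_lt
  let step : (η : (ℵ₁ : Cardinal.{u}).ord.ToType) →
      ((ζ : (ℵ₁ : Cardinal.{u}).ord.ToType) → ζ < η → Set X) → Set X := fun η ih =>
    closure ({z₀} ∪ (⋃ p : {ζ // ζ < η}, ih p.1 p.2) ∪
      (Φ '' {f | ∀ n, (f n).1 ∈ ⋃ p : {ζ // ζ < η}, ih p.1 p.2}))
  let H : (ℵ₁ : Cardinal.{u}).ord.ToType → Set X := wfI.fix step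
  have hHeq : ∀ η, H η = closure ({z₀} ∪ (⋃ p : {ζ // ζ < η}, H p.1) ∪
      (Φ '' {f | ∀ n, (f n).1 ∈ ⋃ p : {ζ // ζ < η}, H p.1})) := fun η =>
    wfI.fix_eq step η
  have hz₀mem : ∀ η, z₀ ∈ H η := fun η => by
    rw [hHeq η]; exact subset_closure (Or.inl (Or.inl rfl))
  -- size of initial segments
  have hIio : ∀ η : (ℵ₁ : Cardinal.{u}).ord.ToType,
      #{ζ // ζ < η} ≤ Cardinal.continuum := by
    intro η
    have h1 : #{ζ // ζ < η} = (typein (α := (ℵ₁ : Cardinal.{u}).ord.ToType) (· < ·) η).card :=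
      (card_typein _).symm
    rw [h1]
    refine le_trans (Ordinal.card_le_card (typein_lt_self η).le) ?_
    rw [Cardinal.card_ord]
    exact Cardinal.aleph_one_le_continuum
  -- sizes of the stages
  have hHcard : ∀ η, #(H η) ≤ Cardinal.continuum := by
    intro η
    refine wfI.induction (C := fun η => #(H η) ≤ Cardinal.continuum) η ?_
    intro η ih
    have hSUcard : #(⋃ p : {ζ // ζ < η}, H p.1) ≤ Cardinal.continuum := by
      refine le_trans (Cardinal.mk_iUnion_le _) ?_
      refine le_trans (mul_le_mul' (hIio η) (ciSup_le' fun p => ih p.1 p.2)) ?_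
      exact le_of_eq Cardinal.continuum_mul_self
    rw [hHeq η]
    refine mk_closure_le_continuum ?_
    refine le_trans (Cardinal.mk_union_le _ _) ?_
    have h1 : #({z₀} ∪ (⋃ p : {ζ // ζ < η}, H p.1) : Set X) ≤ Cardinal.continuum := by
      refine le_trans (Cardinal.mk_union_le _ _) ?_
      refine le_trans (add_le_add ?_ hSUcard) Cardinal.continuum_add_self.le
      have hz' : #({z₀} : Set X) = 1 := Cardinal.mk_singleton _
      rw [hz']
      exact Cardinal.one_le_aleph0.trans Cardinal.aleph0_le_continuum
    have h2 : #(Φ '' {f | ∀ n, (f n).1 ∈ ⋃ p : {ζ // ζ < η}, H p.1}) ≤ Cardinal.continuum :=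
      le_trans Cardinal.mk_image_le (mk_seqset_le hSUcard)
    exact le_trans (add_le_add h1 h2) Cardinal.continuum_add_self.le
  -- the total set
  have hTcard : #(⋃ η, H η) ≤ Cardinal.continuum := by
    refine le_trans (Cardinal.mk_iUnion_le _) ?_
    refine le_trans (mul_le_mul' ?_ (ciSup_le' fun η => hHcard η)) Cardinal.continuum_mul_self.le
    rw [Cardinal.mk_ord_toType]
    exact Cardinal.aleph_one_le_continuum
  -- countable families of points of the total set live in a single stage
  have hbdd : ∀ u : ℕ → X, (∀ n, u n ∈ ⋃ η, H η) →
      ∃ η, ∀ n, u n ∈ ⋃ p : {ζ // ζ < η}, H p.1 := by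
    intro u hu
    have hu' : ∀ n, ∃ η, u n ∈ H η := fun n => mem_iUnion.1 (hu n)
    choose st hst using hu'
    obtain ⟨η, hη⟩ := bound_seq Cardinal.isRegular_aleph_one Cardinal.aleph0_lt_aleph_one st
    exact ⟨η, fun n => mem_iUnion.2 ⟨⟨st n, hη n⟩, hst n⟩⟩
  have hTclosed : IsClosed (⋃ η, H η) := by
    refine isClosed_of_closure_subset ?_
    intro x hx
    obtain ⟨u, hu, hul⟩ := mem_closure_iff_seq_limit.1 hx
    obtain ⟨η, hη⟩ := hbdd u hu
    have hx2 : x ∈ closure (⋃ p : {ζ // ζ < η}, H p.1) :=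
      mem_closure_iff_seq_limit.2 ⟨u, hη, hul⟩
    have hsub : closure (⋃ p : {ζ // ζ < η}, H p.1) ⊆ H η := by
      rw [hHeq η]
      exact closure_mono fun y hy => Or.inl (Or.inr hy)
    exact mem_iUnion.2 ⟨η, hsub hx2⟩
  -- L is contained in the total set
  have hLT : L ⊆ ⋃ η, H η := by
    intro z hzL
    by_contra hzT
    have hK : IsLindelof (L ∩ ⋃ η, H η) := hLin.inter_right hTclosed
    have hnk : ∀ k : ↥(L ∩ ⋃ η, H η), ∃ n : ℕ, B k.1 n ⊆ {z}ᶜ := by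
      intro k
      refine hBbase k.1 {z}ᶜ (compl_singleton_mem_nhds ?_)
      exact fun h => hzT (h ▸ k.2.2)
    choose nk hnkspec using hnk
    obtain ⟨t, htc, htcov⟩ := hK.elim_countable_subcover
      (fun k : ↥(L ∩ ⋃ η, H η) => B k.1 (nk k)) (fun k => hBopen _ _)
      (fun x hx => mem_iUnion.2 ⟨⟨x, hx⟩, hBmem _ _⟩)
    have hz₀K : z₀ ∈ L ∩ ⋃ η, H η := by
      refine ⟨hz₀, ?_⟩
      haveI : Nonempty (ℵ₁ : Cardinal.{u}).ord.ToType :=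
        Cardinal.nonempty_ord_toType (Cardinal.aleph0_pos.trans Cardinal.aleph0_lt_aleph_one).ne'
      exact mem_iUnion.2 ⟨Classical.arbitrary _, hz₀mem _⟩
    rcases t.eq_empty_or_nonempty with rfl | htne
    · have := htcov hz₀K
      simp at this
    obtain ⟨e, he⟩ := htc.exists_eq_range htne
    set fc : ℕ → X × ℕ := fun m => ((e m).1, nk (e m)) with hfc
    have hcov2 : L ∩ (⋃ η, H η) ⊆ ⋃ n, B (fc n).1 (fc n).2 := by
      intro x hx
      have hx2 := htcov hx
      rw [he, Set.biUnion_range] at hx2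
      exact hx2
    have hfcT : ∀ m, (fc m).1 ∈ ⋃ η, H η := fun m => (e m).2.2
    obtain ⟨η, hη⟩ := hbdd (fun m => (fc m).1) hfcT
    have hΦT : Φ fc ∈ ⋃ η', H η' := by
      have h1 : Φ fc ∈ Φ '' {f | ∀ n, (f n).1 ∈ ⋃ p : {ζ // ζ < η}, H p.1} := ⟨fc, hη, rfl⟩
      have h2 : Φ fc ∈ H η := by
        rw [hHeq η]; exact subset_closure (Or.inr h1)
      exact mem_iUnion.2 ⟨η, h2⟩
    have hzdiff : (L \ ⋃ n, B (fc n).1 (fc n).2).Nonempty := by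
      refine ⟨z, hzL, fun hmem => ?_⟩
      obtain ⟨m, hm⟩ := mem_iUnion.1 hmem
      exact hnkspec (e m) hm rfl
    exact hΦnot fc hzdiff (hcov2 ⟨hΦL fc, hΦT⟩)
  exact le_trans (Cardinal.mk_le_mk_of_subset hLT) hTcard

/-- The covering property we extract: the complement of `A` is covered by at most
continuum many closures of the chosen neighbourhoods. -/
def Cov (A : Set X) (V : X → Set X) : Prop :=
  ∃ T : Set X, T ⊆ Aᶜ ∧ #T ≤ Cardinal.continuum ∧ Aᶜ ⊆ ⋃ t ∈ T, closure (V t)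

lemma rest_nonempty [FirstCountableTopology X] [T2Space X] {A : Set X} {V : X → Set X}
    (hVA : ∀ x ∈ A, V x = ∅) (hVmem : ∀ x ∉ A, x ∈ V x) (hnc : ¬ Cov A V)
    {P : Type u} (hP : #P ≤ Cardinal.continuum) (f : P → X) :
    (Aᶜ \ ((⋃ p, closure (V (f p))) ∪ closure (range f))).Nonempty := by
  rw [Set.nonempty_iff_ne_empty]
  intro hemp
  have hsub : Aᶜ ⊆ (⋃ p, closure (V (f p))) ∪ closure (range f) := by
    rw [← Set.diff_eq_empty]
    exact hemp
  refine hnc ⟨closure (range f) ∩ Aᶜ, inter_subset_right, ?_, ?_⟩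
  · exact le_trans (Cardinal.mk_le_mk_of_subset inter_subset_left)
      (mk_closure_le_continuum (le_trans Cardinal.mk_range_le hP))
  · intro y hy
    rcases hsub hy with hy1 | hy2
    · obtain ⟨p, hp⟩ := mem_iUnion.1 hy1
      by_cases hfA : f p ∈ A
      · rw [hVA _ hfA] at hp
        simp at hp
      · exact mem_biUnion ⟨subset_closure (mem_range_self p), hfA⟩ hp
    · exact mem_biUnion ⟨hy2, hy⟩ (subset_closure (hVmem y hy))

lemma no_cov_false [FirstCountableTopology X] [T2Space X]
    (hADL : AlmostDiscretelyLindelof X) {A : Set X} {V : X → Set X}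
    (hVopen : ∀ x, IsOpen (V x)) (hVA : ∀ x ∈ A, V x = ∅)
    (hVmem : ∀ x ∉ A, x ∈ V x) (hnc : ¬ Cov A V) : False := by
  classical
  haveI hwo : IsWellOrder (Order.succ (Cardinal.continuum.{u})).ord.ToType (· < ·) :=
    isWellOrder_lt
  have wfI : WellFounded ((· < ·) : (Order.succ (Cardinal.continuum.{u})).ord.ToType →
      (Order.succ (Cardinal.continuum.{u})).ord.ToType → Prop) := wellFounded_lt
  have hP : ∀ β : (Order.succ (Cardinal.continuum.{u})).ord.ToType,
      #{α // α < β} ≤ Cardinal.continuum := by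
    intro β
    have h1 : #{α // α < β}
        = (typein (α := (Order.succ (Cardinal.continuum.{u})).ord.ToType) (· < ·) β).card :=
      (card_typein _).symm
    have h2 := Cardinal.card_typein_lt
      (r := ((· < ·) : (Order.succ (Cardinal.continuum.{u})).ord.ToType →
        (Order.succ (Cardinal.continuum.{u})).ord.ToType → Prop)) β
      (by rw [Cardinal.mk_ord_toType, type_toType])
    rw [Cardinal.mk_ord_toType] at h2
    rw [h1]
    exact Order.lt_succ_iff.1 h2
  let step : (β : (Order.succ (Cardinal.continuum.{u})).ord.ToType) →
      ((α : (Order.succ (Cardinal.continuum.{u})).ord.ToType) → α < β → X) → X := fun β ih =>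
    (rest_nonempty hVA hVmem hnc (hP β) (fun p : {α // α < β} => ih p.1 p.2)).choose
  let g : (Order.succ (Cardinal.continuum.{u})).ord.ToType → X := wfI.fix step
  have hgspec : ∀ β, g β ∈ Aᶜ \ ((⋃ p : {α // α < β}, closure (V (g p.1))) ∪
      closure (range (fun p : {α // α < β} => g p.1))) := by
    intro β
    have he : g β = step β (fun α _ => g α) := wfI.fix_eq step β
    rw [he]
    exact (rest_nonempty hVA hVmem hnc (hP β) (fun p : {α // α < β} => g p.1)).choose_spec
  have hgA : ∀ β, g β ∉ A := fun β => (hgspec β).1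
  have hg2 : ∀ α β, α < β → g β ∉ closure (V (g α)) := fun α β h hc =>
    (hgspec β).2 (Or.inl (mem_iUnion.2 ⟨⟨α, h⟩, hc⟩))
  have hg3 : ∀ β, g β ∉ closure (range fun p : {α // α < β} => g p.1) := fun β hc =>
    (hgspec β).2 (Or.inr hc)
  have hginj : Function.Injective g := by
    intro a b hab
    rcases lt_trichotomy a b with h | h | h
    · exact absurd (subset_closure (mem_range.mpr ⟨⟨a, h⟩, hab⟩)) (hg3 b)
    · exact h
    · exact absurd (subset_closure (mem_range.mpr ⟨⟨b, h⟩, hab.symm⟩)) (hg3 a)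
  have hdisc : IsDiscreteSubset (range g) := by
    rintro x ⟨β, rfl⟩
    refine ⟨V (g β) ∩ (closure (range fun p : {α // α < β} => g p.1))ᶜ,
      (hVopen _).inter isClosed_closure.isOpen_compl, ?_⟩
    refine Set.eq_singleton_iff_unique_mem.2 ⟨⟨⟨hVmem _ (hgA β), hg3 β⟩, ⟨β, rfl⟩⟩, ?_⟩
    rintro y ⟨⟨hyV, hycl⟩, γ, rfl⟩
    rcases lt_trichotomy γ β with h | h | h
    · have hmem : g γ ∈ closure (range fun p : {α // α < β} => g p.1) :=
        subset_closure (mem_range.mpr ⟨⟨γ, h⟩, rfl⟩)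
      exact absurd hmem hycl
    · rw [h]
    · exact absurd (subset_closure hyV) (hg2 β γ h)
  obtain ⟨L, hLin, hsub⟩ := hADL (range g) hdisc
  have h1 : (Order.succ (Cardinal.continuum.{u}) : Cardinal) ≤ Cardinal.continuum := by
    calc (Order.succ (Cardinal.continuum.{u}) : Cardinal)
        = #(Order.succ (Cardinal.continuum.{u})).ord.ToType := (Cardinal.mk_ord_toType _).symm
      _ = #(range g) := (Cardinal.mk_range_eq g hginj).symm
      _ ≤ #L := Cardinal.mk_le_mk_of_subset hsub
      _ ≤ Cardinal.continuum := isLindelof_card_le hLin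
  exact absurd h1 (not_le.2 (Order.lt_succ _))

end StmtOneAux

/-- in an almost discretely Lindelöf first-countable Hausdorff space,
every θ-closed set is the intersection of at most `𝔠` many open sets. -/
theorem stmt1 {X : Type u} [TopologicalSpace X] [T2Space X]
    [FirstCountableTopology X] (hADL : AlmostDiscretelyLindelof X)
    (A : Set X) (hA : IsThetaClosed A) :
    ∃ 𝒰 : Set (Set X), #𝒰 ≤ Cardinal.continuum ∧ (∀ U ∈ 𝒰, IsOpen U) ∧
      A = ⋂₀ 𝒰 := by

  classical
  let V : X → Set X := fun x =>
    if h : ∃ U : Set X, IsOpen U ∧ x ∈ U ∧ closure U ∩ A = ∅ then h.choose else ∅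
  have hVopen : ∀ x, IsOpen (V x) := by
    intro x
    by_cases h : ∃ U : Set X, IsOpen U ∧ x ∈ U ∧ closure U ∩ A = ∅
    · simp only [V, dif_pos h]
      exact h.choose_spec.1
    · simp only [V, dif_neg h]
      exact isOpen_empty
  have hVmem : ∀ x ∉ A, x ∈ V x ∧ closure (V x) ∩ A = ∅ := by
    intro x hx
    have hex : ∃ U : Set X, IsOpen U ∧ x ∈ U ∧ closure U ∩ A = ∅ := by
      have hx' : x ∉ thetaCl A := by rw [hA]; exact hx
      simp only [thetaCl, mem_setOf_eq] at hx'
      push_neg at hx'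
      obtain ⟨U, hU1, hU2, hU3⟩ := hx'
      exact ⟨U, hU1, hU2, hU3⟩
    simp only [V, dif_pos hex]
    exact ⟨hex.choose_spec.2.1, hex.choose_spec.2.2⟩
  have hVA : ∀ x ∈ A, V x = ∅ := by
    intro x hx
    simp only [V]
    rw [dif_neg]
    rintro ⟨U, hU1, hU2, hU3⟩
    have hmem : x ∈ closure U ∩ A := ⟨subset_closure hU2, hx⟩
    rw [hU3] at hmem
    exact hmem
  have hcov : StmtOneAux.Cov A V := by
    by_contra hnc
    exact StmtOneAux.no_cov_false hADL hVopen hVA (fun x hx => (hVmem x hx).1) hnc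
  obtain ⟨T, hTA, hTc, hTcov⟩ := hcov
  refine ⟨(fun t => (closure (V t))ᶜ) '' T, le_trans Cardinal.mk_image_le hTc, ?_, ?_⟩
  · rintro U ⟨t, ht, rfl⟩
    exact isClosed_closure.isOpen_compl
  · apply Set.Subset.antisymm
    · intro a ha
      refine mem_sInter.2 ?_
      rintro U ⟨t, ht, rfl⟩
      intro hc
      have hd := (hVmem t (hTA ht)).2
      have hmem : a ∈ closure (V t) ∩ A := ⟨hc, ha⟩
      rw [hd] at hmem
      exact hmem
    · intro y hy
      by_contra hyA
      obtain ⟨t, ht, hyt⟩ := mem_iUnion₂.1 (hTcov hyA)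
      have hy2 : y ∈ (closure (V t))ᶜ := mem_sInter.1 hy _ ⟨t, ht, rfl⟩
      exact hy2 hyt
end

section
/- In an almost discretely Lindelöf topological space X of character at most κ, every free sequence has length at most κ. In particular, in a first-countable almost discretely Lindelöf space every free sequence is countable. -/
open Cardinal Set Topology

universe u

/-- in an almost discretely Lindelöf space of character at most `κ`,
every free sequence has length at most `κ` (in particular, free sequences in
first-countable such spaces are countable). -/
theorem stmt2 {X : Type u} [TopologicalSpace X] (κ : Cardinal.{u}) (hκ : ℵ₀ ≤ κ)
    (hχ : HasCharacterLE X κ) (hADL : AlmostDiscretelyLindelof X) :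
    ∀ (ι : Type u) [LinearOrder ι] [WellFoundedLT ι] (f : ι → X),
      IsFreeSeq f → #ι ≤ κ := by
  intro ι _ _ f hfree
  by_contra hcon
  push_neg at hcon
  -- every `f i` avoids the closure of the earlier part
  have hdisj : ∀ i : ι, f i ∉ closure (f '' {j | j < i}) := by
    intro i hmem
    have h2 : f i ∈ closure (f '' {j | i ≤ j}) :=
      subset_closure ⟨i, le_refl i, rfl⟩
    have h3 : f i ∈ closure (f '' {j | j < i}) ∩ closure (f '' {j | i ≤ j}) := ⟨hmem, h2⟩
    rw [hfree i] at h3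
    exact h3
  -- the range of `f` is discrete
  have hD : IsDiscreteSubset (range f) := by
    rintro x ⟨i, rfl⟩
    refine ⟨(closure (f '' {j | j < i}) ∪ closure (f '' {j | i < j}))ᶜ,
      (isClosed_closure.union isClosed_closure).isOpen_compl, ?_⟩
    have hfi2 : f i ∉ closure (f '' {j | i < j}) := by
      rcases eq_empty_or_nonempty {j | i < j} with hne | hne
      · rw [hne]; simp
      · intro hmem
        set m := (IsWellFounded.wf (r := ((· < ·) : ι → ι → Prop))).min {j | i < j} hne with hm
        have hmmem : i < m := (IsWellFounded.wf).min_mem {j | i < j} hne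
        have hsub : {j | i < j} ⊆ {j | m ≤ j} := by
          intro j hj
          exact not_lt.1 fun hlt => (IsWellFounded.wf).not_lt_min {j | i < j} hj hlt
        have h1 : f i ∈ closure (f '' {j | j < m}) := subset_closure ⟨i, hmmem, rfl⟩
        have h2 : f i ∈ closure (f '' {j | m ≤ j}) :=
          closure_mono (image_mono hsub) hmem
        have h3 : f i ∈ closure (f '' {j | j < m}) ∩ closure (f '' {j | m ≤ j}) := ⟨h1, h2⟩
        rw [hfree m] at h3
        exact h3
    apply Subset.antisymm
    · rintro y ⟨hyU, j, rfl⟩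
      rcases lt_trichotomy j i with h | h | h
      · have : f j ∈ closure (f '' {k | k < i}) := subset_closure ⟨j, h, rfl⟩
        exact absurd (Or.inl this) hyU
      · rw [h]; rfl
      · have : f j ∈ closure (f '' {k | i < k}) := subset_closure ⟨j, h, rfl⟩
        exact absurd (Or.inr this) hyU
    · rintro y (rfl : y = f i)
      refine ⟨?_, ⟨i, rfl⟩⟩
      rintro (h1 | h2)
      · exact hdisj i h1
      · exact hfi2 h2
  obtain ⟨L, hLin, hrange⟩ := hADL (range f) hD
  -- an embedding of a well order of size `κ⁺` into `ι`
  set Λ := (Order.succ κ).ord.ToType with hΛdef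
  haveI : NoMaxOrder Λ := Cardinal.noMaxOrder (hκ.trans (Order.le_succ κ))
  haveI : Nonempty Λ := by
    rw [hΛdef, Ordinal.toType_nonempty_iff_ne_zero, Ne, Cardinal.ord_eq_zero]
    exact Cardinal.succ_ne_zero κ
  have htype : @Ordinal.type Λ (· < ·) isWellOrder_lt = (Order.succ κ).ord :=
    Ordinal.type_toType _
  have hbound : ∀ S : Set Λ, #S ≤ κ → ∃ b : Λ, ∀ a ∈ S, a < b := by
    intro S hS
    have hlt : #S < Order.cof Λ := by
      have hc : Order.cof Λ = Order.succ κ := by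
        rw [Ordinal.cof_toType, (Cardinal.isRegular_succ hκ).cof_eq]
      rw [hc]
      exact hS.trans_lt (Order.lt_succ κ)
    by_contra hno
    push_neg at hno
    exact (Order.cof_le (s := S) hno).not_gt hlt
  obtain ⟨g⟩ : Nonempty (((· < ·) : Λ → Λ → Prop) ↪r ((· < ·) : ι → ι → Prop)) := by
    have h2 : @Ordinal.type Λ (· < ·) isWellOrder_lt ≤ @Ordinal.type ι (· < ·) isWellOrder_lt := by
      rw [htype]
      calc (Order.succ κ).ord ≤ (@Ordinal.type ι (· < ·) isWellOrder_lt).card.ord := by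
            rw [Ordinal.card_type]; exact Cardinal.ord_le_ord.2 (Order.succ_le_of_lt hcon)
        _ ≤ _ := Cardinal.ord_card_le _
    exact (@Ordinal.type_le_iff' Λ ι _ _ isWellOrder_lt isWellOrder_lt).1 h2
  have gstrict : StrictMono (g : Λ → ι) := fun a b h => g.map_rel_iff.2 h
  have gmono := gstrict.monotone
  -- the decreasing family of tail closures
  set C : Λ → Set X := fun α => closure (f '' ((g : Λ → ι) '' {β | α ≤ β})) with hCdef
  have hCL : (L ∩ ⋂ α, C α).Nonempty := by
    rw [nonempty_iff_ne_empty]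
    intro hemp
    obtain ⟨v, hvcnt, hvemp⟩ :=
      hLin.elim_countable_subfamily_closed C (fun _ => isClosed_closure) hemp
    obtain ⟨b, hb⟩ : ∃ b : Λ, ∀ a ∈ v, a < b := by
      refine hbound v ?_
      have : #v ≤ ℵ₀ := by
        rw [Cardinal.mk_le_aleph0_iff, ← Set.countable_coe_iff] at *
        exact hvcnt
      exact this.trans hκ
    have hmem : f (g b) ∈ L ∩ ⋂ α ∈ v, C α := by
      refine ⟨hrange ⟨g b, rfl⟩, ?_⟩
      simp only [mem_iInter]
      intro α hα
      exact subset_closure ⟨g b, ⟨b, (hb α hα).le, rfl⟩, rfl⟩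
    rw [hvemp] at hmem
    exact hmem
  obtain ⟨x, hxL, hxC⟩ := hCL
  rw [mem_iInter] at hxC
  -- x avoids the closures of initial pieces
  have hxavoid : ∀ α : Λ, x ∉ closure (f '' {j | j < g α}) := by
    intro α hmem
    have h2 : x ∈ closure (f '' {j | g α ≤ j}) := by
      refine closure_mono ?_ (hxC α)
      rintro _ ⟨_, ⟨β, hβ, rfl⟩, rfl⟩
      exact ⟨g β, gmono hβ, rfl⟩
    have h3 : x ∈ closure (f '' {j | j < g α}) ∩ closure (f '' {j | g α ≤ j}) := ⟨hmem, h2⟩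
    rw [hfree (g α)] at h3
    exact h3
  obtain ⟨B, hBcard, hBopen, hBbase⟩ := hχ x
  have hU : ∀ α : Λ, ∃ U ∈ B, U ∩ f '' {j | j < g α} = ∅ := by
    intro α
    have hnh : (closure (f '' {j | j < g α}))ᶜ ∈ nhds x :=
      isClosed_closure.isOpen_compl.mem_nhds (hxavoid α)
    obtain ⟨U, hUB, hUsub⟩ := hBbase _ hnh
    refine ⟨U, hUB, eq_empty_iff_forall_notMem.2 ?_⟩
    rintro y ⟨hyU, hyim⟩
    exact hUsub hyU (subset_closure hyim)
  choose U hUB hUdisj using hU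
  set u : Λ → ↥B := fun α => ⟨U α, hUB α⟩ with hudef
  -- some member of the base is used unboundedly often
  obtain ⟨s, hs⟩ : ∃ s : ↥B, ∀ b : Λ, ∃ α, u α = s ∧ b < α := by
    by_contra hall
    push_neg at hall
    choose bnd hbnd using hall
    obtain ⟨b, hb⟩ : ∃ b : Λ, ∀ a ∈ Set.range bnd, a < b :=
      hbound _ ((Cardinal.mk_range_le).trans hBcard)
    have h1 : b ≤ bnd (u b) := hbnd (u b) b rfl
    have h2 : bnd (u b) < b := hb _ ⟨u b, rfl⟩
    exact absurd (h1.trans_lt h2) (lt_irrefl b)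
  -- derive the contradiction
  obtain ⟨α₀⟩ := (inferInstance : Nonempty Λ)
  have hsopen : IsOpen (s : Set X) ∧ x ∈ (s : Set X) := hBopen s s.2
  obtain ⟨y, hys, hyim⟩ := mem_closure_iff.1 (hxC α₀) (s : Set X) hsopen.1 hsopen.2
  obtain ⟨_, ⟨β, hβ, rfl⟩, rfl⟩ := hyim
  obtain ⟨γ, hγ⟩ := exists_gt β
  obtain ⟨α, hαs, hγα⟩ := hs γ
  have hgβα : g β < g α := gstrict (hγ.trans hγα)
  have : f (g β) ∈ U α ∩ f '' {j | j < g α} := by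
    refine ⟨?_, ⟨g β, hgβα, rfl⟩⟩
    have : U α = (s : Set X) := congrArg Subtype.val hαs
    rw [this]
    exact hys
  rw [hUdisj α] at this
  exact this
end

section
/- Let X be a topological space and κ a cardinal such that every θ-free sequence in X has length at most κ, and for every θ-free sequence F the θ-closure [F]_θ is an intersection of at most 2^κ open sets. Then there is a set A ⊆ X with |A| ≤ 2^κ whose θ-closure is all of X. -/
open Cardinal Set Topology

universe u

section Stmt4Aux

variable {X : Type u} [TopologicalSpace X]

theorem subset_thetaCl (A : Set X) : A ⊆ thetaCl A := fun x hx U _ hxU =>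
  ⟨x, subset_closure hxU, hx⟩

theorem thetaCl_mono {A B : Set X} (h : A ⊆ B) : thetaCl A ⊆ thetaCl B := by
  intro x hx U hU hxU
  obtain ⟨y, hy1, hy2⟩ := hx U hU hxU
  exact ⟨y, hy1, h hy2⟩

theorem subset_thetaClosure (A : Set X) : A ⊆ thetaClosure A := fun x hx B hB => hB.1 hx

theorem isThetaClosed_thetaClosure (A : Set X) : IsThetaClosed (thetaClosure A) := by
  refine subset_antisymm ?_ (subset_thetaCl _)
  intro x hx B hB
  have h1 : thetaClosure A ⊆ B := Set.sInter_subset_of_mem hB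
  have h2 := thetaCl_mono h1 hx
  rwa [hB.2] at h2

theorem thetaClosure_mono {A B : Set X} (h : A ⊆ B) : thetaClosure A ⊆ thetaClosure B := by
  intro x hx C hC
  exact hx C ⟨h.trans hC.1, hC.2⟩

/-- The hypothesis `hψ` of the theorem, as a definition. -/
def PsiHyp (X : Type u) [TopologicalSpace X] (κ : Cardinal.{u}) : Prop :=
  ∀ (ι : Type u) [LinearOrder ι] [WellFoundedLT ι] (f : ι → X),
      IsThetaFreeSeq f → ∃ 𝒰 : Set (Set X), #𝒰 ≤ 2 ^ κ ∧ (∀ U ∈ 𝒰, IsOpen U) ∧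
        thetaClosure (Set.range f) = ⋂₀ 𝒰

variable {κ : Cardinal.{u}}

/-- The index type: a well order of type `(κ⁺).ord`. -/
abbrev TT (κ : Cardinal.{u}) : Type u := (Order.succ κ).ord.ToType

theorem card_TT : #(TT κ) = Order.succ κ := by
  rw [Cardinal.mk_toType, Cardinal.card_ord]

theorem card_Iio_le (i : TT κ) : #(Set.Iio i) ≤ κ :=
  Order.lt_succ_iff.1 (Cardinal.mk_Iio_ord_toType i)

theorem card_Iic_le (hκ : ℵ₀ ≤ κ) (i : TT κ) : #(Set.Iic i) ≤ κ := by
  rw [← Set.Iio_insert]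
  refine (Cardinal.mk_insert_le ..).trans ?_
  calc #(Set.Iio i) + 1 ≤ κ + κ := add_le_add (card_Iio_le i) (le_trans Cardinal.one_le_aleph0 hκ)
  _ = κ := Cardinal.add_eq_self hκ

theorem bounded_TT (hκ : ℵ₀ ≤ κ) (S : Set (TT κ)) (hS : #S ≤ κ) :
    ∃ a : TT κ, ∀ b ∈ S, b < a := by
  have hc : ¬ IsCofinal S := fun hc => by
    have := Order.cof_le hc
    rw [Ordinal.cof_toType, (Cardinal.isRegular_succ hκ).cof_ord] at this
    exact absurd (this.trans hS) (not_le.2 (Order.lt_succ κ))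
  simp only [IsCofinal, not_forall, not_exists, not_and, not_le] at hc
  obtain ⟨a, ha⟩ := hc
  exact ⟨a, fun b hb => ha b hb⟩

theorem powbound (hκ : ℵ₀ ≤ κ) {a b : Cardinal.{u}} (ha : a ≤ 2 ^ κ) (hb : b ≤ κ) :
    a ^ b ≤ 2 ^ κ := by
  calc a ^ b ≤ (2 ^ κ) ^ b := Cardinal.power_le_power_right ha
  _ ≤ (2 ^ κ) ^ κ := Cardinal.power_le_power_left (Cardinal.power_ne_zero _ two_ne_zero) hb
  _ = 2 ^ (κ * κ) := (Cardinal.power_mul ..).symm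
  _ = 2 ^ κ := by rw [Cardinal.mul_eq_self hκ]

theorem aleph0_le_cont (hκ : ℵ₀ ≤ κ) : ℵ₀ ≤ 2 ^ κ := hκ.trans (Cardinal.cantor κ).le

theorem mulbound (hκ : ℵ₀ ≤ κ) {a b : Cardinal.{u}} (ha : a ≤ 2 ^ κ) (hb : b ≤ 2 ^ κ) :
    a * b ≤ 2 ^ κ := by
  refine (Cardinal.mul_le_max a b).trans ?_
  simp only [max_le_iff]
  exact ⟨⟨ha, hb⟩, aleph0_le_cont hκ⟩

theorem succ_le_cont : Order.succ κ ≤ 2 ^ κ := Order.succ_le_of_lt (Cardinal.cantor κ)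

/-- The chosen family of open sets witnessing `hψ` for a (θ-free) sequence. -/
noncomputable def UU (hψ : PsiHyp X κ) (i : TT κ) (g : ↥(Set.Iio i) → X) : Set (Set X) := by
  classical
  exact if h : IsThetaFreeSeq g then (hψ _ g h).choose else ∅

theorem UU_card (hψ : PsiHyp X κ) (i : TT κ) (g : ↥(Set.Iio i) → X) : #(UU hψ i g) ≤ 2 ^ κ := by
  unfold UU
  split
  · exact (hψ _ g ‹_›).choose_spec.1
  · simp

theorem UU_spec (hψ : PsiHyp X κ) (i : TT κ) (g : ↥(Set.Iio i) → X) (hg : IsThetaFreeSeq g) :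
    (∀ U ∈ UU hψ i g, IsOpen U) ∧ thetaClosure (Set.range g) = ⋂₀ UU hψ i g := by
  unfold UU
  rw [dif_pos hg]
  exact ⟨(hψ _ g hg).choose_spec.2.1, (hψ _ g hg).choose_spec.2.2⟩

/-- Restriction of a sequence to a shorter initial segment. -/
def resg (i : TT κ) (g : ↥(Set.Iio i) → X) {β : TT κ} (hβ : β ≤ i) : ↥(Set.Iio β) → X :=
  fun j => g ⟨j.1, lt_of_lt_of_le j.2 hβ⟩

/-- Pick one point of a set if possible. -/
noncomputable def pick (C : Set X) : Set X := by
  classical exact if h : C.Nonempty then {h.choose} else ∅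

theorem pick_card (C : Set X) : #(pick C) ≤ 1 := by
  unfold pick
  split <;> simp

/-- Admissible choices of open sets along the cuts of a sequence. -/
def HH (hψ : PsiHyp X κ) (i : TT κ) (g : ↥(Set.Iio i) → X) : Set (TT κ → Set X) :=
  {h | (∀ β (hβ : β ≤ i), h β ∈ UU hψ β (resg i g hβ)) ∧ ∀ β, ¬ β ≤ i → h β = ∅}

theorem HH_card (hκ : ℵ₀ ≤ κ) (hψ : PsiHyp X κ) (i : TT κ) (g : ↥(Set.Iio i) → X) :
    #(↥(HH hψ i g)) ≤ 2 ^ κ := by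
  have hinj : Function.Injective
      (fun (h : ↥(HH hψ i g)) (β : ↥(Set.Iic i)) =>
        (⟨h.1 β.1, h.2.1 β.1 β.2⟩ : ↥(UU hψ β.1 (resg i g β.2)))) := by
    intro h h' he
    apply Subtype.ext
    funext β
    by_cases hβ : β ≤ i
    · exact congrArg Subtype.val (congrFun he ⟨β, hβ⟩)
    · rw [h.2.2 β hβ, h'.2.2 β hβ]
  calc #(↥(HH hψ i g)) ≤ #(∀ β : ↥(Set.Iic i), ↥(UU hψ β.1 (resg i g β.2))) :=
        Cardinal.mk_le_of_injective hinj
  _ = Cardinal.prod (fun β : ↥(Set.Iic i) => #(↥(UU hψ β.1 (resg i g β.2)))) := Cardinal.mk_pi _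
  _ ≤ Cardinal.prod (fun _ : ↥(Set.Iic i) => 2 ^ κ) :=
        Cardinal.prod_le_prod _ _ (fun β => UU_card hψ β.1 _)
  _ = (2 ^ κ) ^ #(↥(Set.Iic i)) := by
        rw [Cardinal.prod_const, Cardinal.lift_id, Cardinal.lift_id]
  _ ≤ 2 ^ κ := powbound hκ le_rfl (card_Iic_le hκ i)

/-- One closing-off step. -/
noncomputable def Phi (hψ : PsiHyp X κ) (S : Set X) : Set X :=
  S ∪ ⋃ (i : TT κ), ⋃ (g : {g : ↥(Set.Iio i) → X // IsThetaFreeSeq g ∧ Set.range g ⊆ S}),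
      ⋃ (h : ↥(HH hψ i g.1)), pick ((⋃ β ∈ Set.Iic i, h.1 β)ᶜ)

theorem Phi_superset (hψ : PsiHyp X κ) (S : Set X) : S ⊆ Phi hψ S := Set.subset_union_left

theorem card_sub_le (S : Set X) (hS : #S ≤ 2 ^ κ) (i : TT κ) :
    #{g : ↥(Set.Iio i) → X // IsThetaFreeSeq g ∧ Set.range g ⊆ S} ≤ 2 ^ κ → True := fun _ => trivial

theorem card_Phi (hκ : ℵ₀ ≤ κ) (hψ : PsiHyp X κ) (S : Set X) (hS : #S ≤ 2 ^ κ) :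
    #(Phi hψ S) ≤ 2 ^ κ := by
  have hG : ∀ i : TT κ, #{g : ↥(Set.Iio i) → X // IsThetaFreeSeq g ∧ Set.range g ⊆ S} ≤ 2 ^ κ := by
    intro i
    have hinj : Function.Injective
        (fun (g : {g : ↥(Set.Iio i) → X // IsThetaFreeSeq g ∧ Set.range g ⊆ S})
          (j : ↥(Set.Iio i)) => (⟨g.1 j, g.2.2 (Set.mem_range_self j)⟩ : ↥S)) := by
      intro g g' he
      apply Subtype.ext
      funext j
      exact congrArg Subtype.val (congrFun he j)
    calc #{g : ↥(Set.Iio i) → X // IsThetaFreeSeq g ∧ Set.range g ⊆ S}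
        ≤ #(↥(Set.Iio i) → ↥S) := Cardinal.mk_le_of_injective hinj
    _ = #(↥S) ^ #(↥(Set.Iio i)) := (Cardinal.power_def ..).symm
    _ ≤ 2 ^ κ := powbound hκ hS (card_Iio_le i)
  refine (Cardinal.mk_union_le ..).trans ?_
  have hW : #(⋃ (i : TT κ), ⋃ (g : {g : ↥(Set.Iio i) → X // IsThetaFreeSeq g ∧ Set.range g ⊆ S}),
      ⋃ (h : ↥(HH hψ i g.1)), pick ((⋃ β ∈ Set.Iic i, h.1 β)ᶜ)) ≤ 2 ^ κ := by
    refine (Cardinal.mk_iUnion_le _).trans ?_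
    refine mulbound hκ (card_TT ▸ succ_le_cont) (ciSup_le' fun i => ?_)
    refine (Cardinal.mk_iUnion_le _).trans ?_
    refine mulbound hκ (hG i) (ciSup_le' fun g => ?_)
    refine (Cardinal.mk_iUnion_le _).trans ?_
    refine mulbound hκ (HH_card hκ hψ i g.1) (ciSup_le' fun h => ?_)
    exact (pick_card _).trans (le_trans Cardinal.one_le_aleph0 (aleph0_le_cont hκ))
  calc #(↥S) + _ ≤ 2 ^ κ + 2 ^ κ := add_le_add hS hW
  _ = 2 ^ κ := Cardinal.add_eq_self (aleph0_le_cont hκ)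

/-- The closing-off chain. -/
noncomputable def Ach (hψ : PsiHyp X κ) : TT κ → Set X :=
  WellFounded.fix wellFounded_lt (fun i ih => Phi hψ (⋃ j : ↥(Set.Iio i), ih j.1 j.2))

theorem Ach_eq (hψ : PsiHyp X κ) (i : TT κ) :
    Ach hψ i = Phi hψ (⋃ j : ↥(Set.Iio i), Ach hψ j.1) :=
  WellFounded.fix_eq ..

/-- The closed-off set. -/
noncomputable def AA (hψ : PsiHyp X κ) : Set X := ⋃ i : TT κ, Ach hψ i

theorem Ach_subset_AA (hψ : PsiHyp X κ) (i : TT κ) : Ach hψ i ⊆ AA hψ :=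
  Set.subset_iUnion (fun i : TT κ => Ach hψ i) i

theorem card_Ach (hκ : ℵ₀ ≤ κ) (hψ : PsiHyp X κ) : ∀ i : TT κ, #(Ach hψ i) ≤ 2 ^ κ := by
  intro i
  induction i using WellFoundedLT.induction with
  | _ i IH =>
    rw [Ach_eq]
    refine card_Phi hκ hψ _ ?_
    refine (Cardinal.mk_iUnion_le _).trans ?_
    exact mulbound hκ ((card_Iio_le i).trans (Cardinal.cantor κ).le) (ciSup_le' fun j => IH j.1 j.2)

theorem card_AA (hκ : ℵ₀ ≤ κ) (hψ : PsiHyp X κ) : #(AA hψ) ≤ 2 ^ κ := by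
  refine (Cardinal.mk_iUnion_le _).trans ?_
  exact mulbound hκ (card_TT ▸ succ_le_cont) (ciSup_le' fun i => card_Ach hκ hψ i)

theorem pick_subset_AA (hκ : ℵ₀ ≤ κ) (hψ : PsiHyp X κ) (i : TT κ) (g : ↥(Set.Iio i) → X)
    (hg : IsThetaFreeSeq g) (hr : Set.range g ⊆ AA hψ) (h : TT κ → Set X) (hh : h ∈ HH hψ i g) :
    pick ((⋃ β ∈ Set.Iic i, h β)ᶜ) ⊆ AA hψ := by
  have hch : ∀ j : ↥(Set.Iio i), ∃ t : TT κ, g j ∈ Ach hψ t := by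
    intro j
    have := hr (Set.mem_range_self j)
    simpa [AA, Set.mem_iUnion] using this
  choose t ht using hch
  obtain ⟨i', hi'⟩ := bounded_TT hκ (Set.range t) (Cardinal.mk_range_le.trans (card_Iio_le i))
  have hsub : Set.range g ⊆ ⋃ j : ↥(Set.Iio i'), Ach hψ j.1 := by
    rintro v ⟨j, rfl⟩
    exact Set.mem_iUnion.2 ⟨⟨t j, hi' _ (Set.mem_range_self j)⟩, ht j⟩
  have hsub2 : pick ((⋃ β ∈ Set.Iic i, h β)ᶜ) ⊆ Phi hψ (⋃ j : ↥(Set.Iio i'), Ach hψ j.1) := by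
    intro y hy
    refine Set.mem_union_right _ ?_
    refine Set.mem_iUnion.2 ⟨i, ?_⟩
    refine Set.mem_iUnion.2 ⟨⟨g, hg, hsub⟩, ?_⟩
    exact Set.mem_iUnion.2 ⟨⟨h, hh⟩, hy⟩
  rw [← Ach_eq] at hsub2
  exact hsub2.trans (Ach_subset_AA hψ i')

/-- Choice of a member of `UU` avoiding `z`. -/
noncomputable def uch (hψ : PsiHyp X κ) (z : X) (β : TT κ) (g : ↥(Set.Iio β) → X) : Set X := by
  classical
  exact if hc : ∃ V ∈ UU hψ β g, z ∉ V then hc.choose else ∅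

theorem uch_spec (hψ : PsiHyp X κ) (z : X) (β : TT κ) (g : ↥(Set.Iio β) → X)
    (hg : IsThetaFreeSeq g) (hz : z ∉ thetaClosure (Set.range g)) :
    uch hψ z β g ∈ UU hψ β g ∧ z ∉ uch hψ z β g := by
  have hex : ∃ V ∈ UU hψ β g, z ∉ V := by
    rw [(UU_spec hψ β g hg).2] at hz
    simpa [Set.mem_sInter] using hz
  unfold uch
  rw [dif_pos hex]
  exact ⟨hex.choose_spec.1, hex.choose_spec.2⟩

/-- Canonical admissible choice of opens for the built sequence. -/
noncomputable def hOf (hψ : PsiHyp X κ) (z : X) (i : TT κ) (g : ↥(Set.Iio i) → X) :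
    TT κ → Set X := by
  classical
  exact fun β => if hβ : β ≤ i then uch hψ z β (resg i g hβ) else ∅

/-- The θ-free sequence of length κ⁺, built by transfinite recursion. -/
noncomputable def xx (hψ : PsiHyp X κ) (z : X) [Nonempty X] : TT κ → X := by
  classical
  exact WellFounded.fix wellFounded_lt (fun i ih =>
    if hne : ((⋃ β ∈ Set.Iic i, hOf hψ z i (fun j : ↥(Set.Iio i) => ih j.1 j.2) β)ᶜ).Nonempty
    then hne.choose else Classical.arbitrary X)

open Classical in
theorem xx_eq (hψ : PsiHyp X κ) (z : X) [Nonempty X] (i : TT κ) : xx hψ z i =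
    if hne : ((⋃ β ∈ Set.Iic i, hOf hψ z i (fun j : ↥(Set.Iio i) => xx hψ z j.1) β)ᶜ).Nonempty
    then hne.choose else Classical.arbitrary X := by
  unfold xx
  exact WellFounded.fix_eq ..

/-- Initial segments of the built sequence. -/
noncomputable def gseq (hψ : PsiHyp X κ) (z : X) [Nonempty X] (β : TT κ) : ↥(Set.Iio β) → X :=
  fun j => xx hψ z j.1

/-- The committed separating open set at cut `β`. -/
noncomputable def Useq (hψ : PsiHyp X κ) (z : X) [Nonempty X] (β : TT κ) : Set X :=
  uch hψ z β (gseq hψ z β)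

theorem resg_gseq (hψ : PsiHyp X κ) (z : X) [Nonempty X] {i β : TT κ} (hβ : β ≤ i) :
    resg i (gseq hψ z i) hβ = gseq hψ z β := rfl

theorem sep (hψ : PsiHyp X κ) (z : X) [Nonempty X] (β : TT κ)
    (hfree : IsThetaFreeSeq (gseq hψ z β))
    (hAAr : Set.range (gseq hψ z β) ⊆ AA hψ)
    (hz : z ∉ thetaClosure (AA hψ))
    (tail : Set X) (htail : ∀ y ∈ tail, y ∉ Useq hψ z β) :
    thetaClosure (Set.range (gseq hψ z β)) ∩ closure tail = ∅ := by
  have hz2 : z ∉ thetaClosure (Set.range (gseq hψ z β)) := fun hmem =>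
    hz (thetaClosure_mono hAAr hmem)
  obtain ⟨hmem, _⟩ := uch_spec hψ z β _ hfree hz2
  have hopen : IsOpen (Useq hψ z β) := (UU_spec hψ β _ hfree).1 _ hmem
  have hsubU : thetaClosure (Set.range (gseq hψ z β)) ⊆ Useq hψ z β := by
    rw [(UU_spec hψ β _ hfree).2]
    exact Set.sInter_subset_of_mem hmem
  rw [Set.eq_empty_iff_forall_notMem]
  rintro y ⟨h1, h2⟩
  obtain ⟨w, hw1, hw2⟩ := mem_closure_iff.1 h2 _ hopen (hsubU h1)
  exact htail w hw2 hw1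

theorem freeSeq (hψ : PsiHyp X κ) (z : X) [Nonempty X] (hz : z ∉ thetaClosure (AA hψ)) :
    ∀ β : TT κ,
      (∀ j, j < β → xx hψ z j ∈ AA hψ ∧ ∀ γ, γ ≤ j → xx hψ z j ∉ Useq hψ z γ) →
      IsThetaFreeSeq (gseq hψ z β) := by
  intro β
  induction β using WellFoundedLT.induction with
  | _ β IH =>
    intro hyp j
    have hγβ : (j : TT κ) < β := j.2
    have E1 : gseq hψ z β '' {j' | j' < j} = Set.range (gseq hψ z j.1) := by
      ext y
      constructor
      · rintro ⟨j', hj', rfl⟩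
        exact ⟨⟨j'.1, hj'⟩, rfl⟩
      · rintro ⟨⟨t, ht⟩, rfl⟩
        exact ⟨⟨t, lt_trans ht hγβ⟩, ht, rfl⟩
    have hfreeγ : IsThetaFreeSeq (gseq hψ z j.1) :=
      IH j.1 hγβ (fun j' hj' => hyp j' (lt_trans hj' hγβ))
    have hAAγ : Set.range (gseq hψ z j.1) ⊆ AA hψ := by
      rintro y ⟨j', rfl⟩
      exact (hyp j'.1 (lt_trans j'.2 hγβ)).1
    rw [E1]
    refine sep hψ z j.1 hfreeγ hAAγ hz _ ?_
    rintro y ⟨j', hj', rfl⟩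
    exact (hyp j'.1 j'.2).2 j.1 hj'

theorem good (hκ : ℵ₀ ≤ κ) (hψ : PsiHyp X κ) (z : X) [Nonempty X]
    (hz : z ∉ thetaClosure (AA hψ)) :
    ∀ i : TT κ, xx hψ z i ∈ AA hψ ∧ ∀ β, β ≤ i → xx hψ z i ∉ Useq hψ z β := by
  intro i
  induction i using WellFoundedLT.induction with
  | _ i IH =>
    have hfree : ∀ β, β ≤ i → IsThetaFreeSeq (gseq hψ z β) := fun β hβ =>
      freeSeq hψ z hz β (fun j hj => IH j (lt_of_lt_of_le hj hβ))
    have hAAr : ∀ β, β ≤ i → Set.range (gseq hψ z β) ⊆ AA hψ := by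
      rintro β hβ y ⟨j, rfl⟩
      exact (IH j.1 (lt_of_lt_of_le j.2 hβ)).1
    have hzr : ∀ β, β ≤ i → z ∉ thetaClosure (Set.range (gseq hψ z β)) :=
      fun β hβ hmem => hz (thetaClosure_mono (hAAr β hβ) hmem)
    have huch : ∀ β, β ≤ i → Useq hψ z β ∈ UU hψ β (gseq hψ z β) ∧ z ∉ Useq hψ z β :=
      fun β hβ => uch_spec hψ z β _ (hfree β hβ) (hzr β hβ)
    have hOfeq : ∀ β (hβ : β ≤ i), hOf hψ z i (gseq hψ z i) β = Useq hψ z β := by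
      intro β hβ
      unfold hOf
      rw [dif_pos hβ]
      rfl
    have hzc : z ∈ (⋃ β ∈ Set.Iic i, hOf hψ z i (gseq hψ z i) β)ᶜ := by
      intro hmem
      obtain ⟨β, hβ, hmem2⟩ := Set.mem_iUnion₂.1 hmem
      rw [hOfeq β hβ] at hmem2
      exact (huch β hβ).2 hmem2
    have hne : ((⋃ β ∈ Set.Iic i, hOf hψ z i (gseq hψ z i) β)ᶜ).Nonempty := ⟨z, hzc⟩
    have hxval : xx hψ z i = hne.choose := by
      rw [xx_eq hψ z i]
      exact dif_pos hne
    have hspec : xx hψ z i ∈ (⋃ β ∈ Set.Iic i, hOf hψ z i (gseq hψ z i) β)ᶜ := by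
      rw [hxval]
      exact hne.choose_spec
    constructor
    · have hmem_pick : xx hψ z i ∈ pick ((⋃ β ∈ Set.Iic i, hOf hψ z i (gseq hψ z i) β)ᶜ) := by
        unfold pick
        rw [dif_pos hne, hxval]
        rfl
      refine pick_subset_AA hκ hψ i (gseq hψ z i) (hfree i le_rfl) (hAAr i le_rfl)
        (hOf hψ z i (gseq hψ z i)) ⟨?_, ?_⟩ hmem_pick
      · intro β hβ
        rw [hOfeq β hβ, resg_gseq hψ z hβ]
        exact (huch β hβ).1
      · intro β hβ
        unfold hOf
        rw [dif_neg hβ]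
    · intro β hβ hmem
      apply hspec
      refine Set.mem_biUnion hβ ?_
      rw [hOfeq β hβ]
      exact hmem

end Stmt4Aux

/-- if every θ-free sequence has length at most `κ` and the θ-closure
of (the range of) every θ-free sequence is an intersection of at most `2^κ` open
sets, then `X` has a θ-dense subset of cardinality at most `2^κ`. -/
theorem stmt4 {X : Type u} [TopologicalSpace X] (κ : Cardinal.{u}) (hκ : ℵ₀ ≤ κ)
    (hF : ∀ (ι : Type u) [LinearOrder ι] [WellFoundedLT ι] (f : ι → X),
      IsThetaFreeSeq f → #ι ≤ κ)
    (hψ : ∀ (ι : Type u) [LinearOrder ι] [WellFoundedLT ι] (f : ι → X),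
      IsThetaFreeSeq f → ∃ 𝒰 : Set (Set X), #𝒰 ≤ 2 ^ κ ∧ (∀ U ∈ 𝒰, IsOpen U) ∧
        thetaClosure (Set.range f) = ⋂₀ 𝒰) :
    ∃ A : Set X, #A ≤ 2 ^ κ ∧ thetaClosure A = Set.univ := by
  by_contra hcontra
  push_neg at hcontra
  have hcon : ∀ A : Set X, #A ≤ 2 ^ κ → thetaClosure A ≠ Set.univ := hcontra
  have hψ' : PsiHyp X κ := hψ
  -- X is nonempty
  haveI hXne : Nonempty X := by
    by_contra hx
    rw [not_nonempty_iff] at hx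
    refine hcon ∅ (by simp) ?_
    ext x
    exact isEmptyElim x
  -- the point z outside the θ-closure of the closed-off set
  obtain ⟨z, hz⟩ := (Set.ne_univ_iff_exists_notMem _).1 (hcon (AA hψ') (card_AA hκ hψ'))
  -- the full sequence is θ-free
  have hg := good hκ hψ' z hz
  have hfull : IsThetaFreeSeq (xx hψ' z) := by
    intro i
    have hfree : IsThetaFreeSeq (gseq hψ' z i) := freeSeq hψ' z hz i (fun j _ => hg j)
    have hAAr : Set.range (gseq hψ' z i) ⊆ AA hψ' := by
      rintro y ⟨j, rfl⟩
      exact (hg j.1).1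
    have E1 : xx hψ' z '' {j | j < i} = Set.range (gseq hψ' z i) := by
      ext y
      constructor
      · rintro ⟨t, ht, rfl⟩
        exact ⟨⟨t, ht⟩, rfl⟩
      · rintro ⟨j, rfl⟩
        exact ⟨j.1, j.2, rfl⟩
    rw [E1]
    refine sep hψ' z i hfree hAAr hz _ ?_
    rintro y ⟨t, ht, rfl⟩
    exact (hg t).2 i ht
  have hcard := hF (TT κ) (xx hψ' z) hfull
  rw [card_TT] at hcard
  exact absurd hcard (not_le.2 (Order.lt_succ κ))
end

section
/- Assume 2^{<𝔠} = 𝔠. Let X be a Hausdorff sequential almost discretely Lindelöf space such that every point of X is the intersection of at most 𝔠 open sets (ψ(X) ≤ 𝔠). Then |X| ≤ 𝔠. -/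
open Cardinal Set Topology

universe u

/-- `tyi i` is the ordinal rank of `i` in `o.ToType`. -/
noncomputable def tyi {o : Ordinal.{u}} (i : o.ToType) : Ordinal.{u} :=
  @Ordinal.typein o.ToType (· < ·) isWellOrder_lt i

theorem tyi_lt_self {o : Ordinal.{u}} (i : o.ToType) : tyi i < o := Ordinal.typein_lt_self i

theorem tyi_surj {o o' : Ordinal.{u}} (h : o' < o) : ∃ i : o.ToType, tyi i = o' := by
  refine ⟨Ordinal.ToType.mk ⟨o', h⟩, ?_⟩
  exact congrArg Subtype.val ((Ordinal.ToType.mk (o := o)).symm_apply_apply ⟨o', h⟩)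

theorem card_tyi {o : Ordinal.{u}} (i : o.ToType) :
    (tyi i).card = #{j : o.ToType // j < i} :=
  @Ordinal.card_typein o.ToType (· < ·) isWellOrder_lt i

/-- Transfinite iteration of a `step` operation on sets, taking unions at limits. -/
noncomputable def iterStep {X : Type u} (step : Set X → Set X) (o : Ordinal.{u}) : Set X :=
  step (⋃ i : o.ToType, iterStep step (tyi i))
termination_by o
decreasing_by exact tyi_lt_self i

/-- Union of all earlier stages. -/
noncomputable def iterStepU {X : Type u} (step : Set X → Set X) (o : Ordinal.{u}) : Set X :=
  ⋃ i : o.ToType, iterStep step (tyi i)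

theorem iterStep_def {X : Type u} (step : Set X → Set X) (o : Ordinal.{u}) :
    iterStep step o = step (iterStepU step o) := by
  rw [iterStep]; rfl

section Infra
variable {X : Type u} {step : Set X → Set X}

theorem iterStep_subset_iterStepU {o o' : Ordinal.{u}} (h : o' < o) :
    iterStep step o' ⊆ iterStepU step o := by
  obtain ⟨i, rfl⟩ := tyi_surj h
  exact subset_iUnion (fun i : o.ToType => iterStep step (tyi i)) i

theorem iterStepU_subset (hsub : ∀ S, S ⊆ step S) (o : Ordinal.{u}) :
    iterStepU step o ⊆ iterStep step o := by
  rw [iterStep_def]; exact hsub _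

theorem iterStep_mono (hsub : ∀ S, S ⊆ step S) {o o' : Ordinal.{u}} (h : o' ≤ o) :
    iterStep step o' ⊆ iterStep step o := by
  rcases eq_or_lt_of_le h with rfl | h
  · exact le_rfl
  · exact (iterStep_subset_iterStepU h).trans (iterStepU_subset hsub o)

theorem mk_iterStep_le (hcard : ∀ S : Set X, #S ≤ 𝔠 → #(step S) ≤ 𝔠) :
    ∀ o : Ordinal.{u}, o.card ≤ 𝔠 → #(iterStep step o) ≤ 𝔠 := by
  intro o
  induction o using Ordinal.induction with
  | _ o IH =>
    intro ho
    rw [iterStep_def]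
    apply hcard
    calc #(iterStepU step o) ≤ Cardinal.sum fun i : o.ToType => #(iterStep step (tyi i)) :=
          mk_iUnion_le_sum_mk
      _ ≤ Cardinal.sum fun _ : o.ToType => 𝔠 := by
          apply Cardinal.sum_le_sum
          intro i
          exact IH _ (tyi_lt_self i) (le_trans (Ordinal.card_le_card (tyi_lt_self i).le) ho)
      _ = #o.ToType * 𝔠 := by simp [Cardinal.sum_const']
      _ ≤ 𝔠 * 𝔠 := by
          apply mul_le_mul' _ le_rfl
          rw [Cardinal.mk_toType]; exact ho
      _ = 𝔠 := mul_eq_self aleph0_le_continuum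

theorem mk_iterStepU_le (hcard : ∀ S : Set X, #S ≤ 𝔠 → #(step S) ≤ 𝔠)
    {l : Ordinal.{u}} (hl : l.card ≤ 𝔠) : #(iterStepU step l) ≤ 𝔠 := by
  calc #(iterStepU step l) ≤ Cardinal.sum fun i : l.ToType => #(iterStep step (tyi i)) :=
        mk_iUnion_le_sum_mk
    _ ≤ Cardinal.sum fun _ : l.ToType => 𝔠 :=
        Cardinal.sum_le_sum _ _ fun i =>
          mk_iterStep_le hcard _ (le_trans (Ordinal.card_le_card (tyi_lt_self i).le) hl)
    _ = #l.ToType * 𝔠 := by simp [Cardinal.sum_const']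
    _ ≤ 𝔠 * 𝔠 := by
        apply mul_le_mul' _ le_rfl
        rw [Cardinal.mk_toType]; exact hl
    _ = 𝔠 := mul_eq_self aleph0_le_continuum

/-- absorption: any small subset of the limit union is inside one stage. -/
theorem small_subset_iterStep (hsub : ∀ S, S ⊆ step S) {l : Ordinal.{u}} (hlim : Order.IsSuccLimit l)
    (T : Set X) (hT : T ⊆ iterStepU step l) (hTc : #T < l.cof) :
    ∃ o : Ordinal.{u}, o < l ∧ T ⊆ iterStep step o := by
  have hch : ∀ t : T, ∃ o : Ordinal.{u}, o < l ∧ (t : X) ∈ iterStep step o := by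
    rintro ⟨t, ht⟩
    obtain ⟨i, hti⟩ := mem_iUnion.1 (hT ht)
    exact ⟨tyi i, tyi_lt_self i, hti⟩
  choose g hg1 hg2 using hch
  refine ⟨(⨆ t, g t) + 1, hlim.succ_lt (Ordinal.iSup_lt_ord ?_ hg1), ?_⟩
  · exact hTc
  · intro t ht
    refine iterStep_mono hsub ?_ (hg2 ⟨t, ht⟩)
    exact le_trans (Ordinal.le_iSup g ⟨t, ht⟩) (Order.le_succ _)

theorem isSeqClosed_iterStepU [TopologicalSpace X] (hsub : ∀ S, S ⊆ step S)
    (hseq : ∀ S, seqClosure S ⊆ step S) {l : Ordinal.{u}} (hlim : Order.IsSuccLimit l)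
    (hcof : ℵ₀ < l.cof) : IsSeqClosed (iterStepU step l) := by
  intro u p hu hup
  obtain ⟨o, hol, hTo⟩ := small_subset_iterStep hsub hlim (range u)
    (range_subset_iff.2 hu) (lt_of_le_of_lt ((countable_range u).le_aleph0) hcof)
  have hp : p ∈ seqClosure (iterStep step o) :=
    ⟨u, fun n => hTo (mem_range_self n), hup⟩
  have h1 : seqClosure (iterStep step o) ⊆ iterStep step (o + 1) := by
    rw [iterStep_def step (o+1)]
    refine le_trans ?_ (hseq _)
    rintro q ⟨v, hv, hvq⟩
    exact ⟨v, fun n => iterStep_subset_iterStepU (Order.lt_succ o) (hv n), hvq⟩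
  exact iterStep_subset_iterStepU (hlim.succ_lt hol) (h1 hp)
end Infra

section Arith

theorem cont_pow_le
    (hch : ∀ κ : Cardinal.{u}, κ < Cardinal.continuum → 2 ^ κ ≤ Cardinal.continuum)
    {κ : Cardinal.{u}} (hκ : κ < 𝔠) : 𝔠 ^ κ ≤ 𝔠 := by
  have hm : max κ ℵ₀ < 𝔠 := max_lt hκ aleph0_lt_continuum
  have h1 : (𝔠 : Cardinal.{u}) ^ κ ≤ 𝔠 ^ max κ ℵ₀ :=
    power_le_power_left continuum_ne_zero (le_max_left _ _)
  have h2 : (𝔠 : Cardinal.{u}) ^ max κ ℵ₀ = 2 ^ max κ ℵ₀ := by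
    rw [← Cardinal.two_power_aleph0, ← Cardinal.power_mul,
      Cardinal.mul_eq_max le_rfl (le_max_right κ ℵ₀), max_comm,
      max_assoc, max_self, max_comm]
  exact h1.trans (h2.le.trans (hch _ hm))

theorem cont_pow_aleph0 : (𝔠 : Cardinal.{u}) ^ (ℵ₀ : Cardinal.{u}) = 𝔠 := by
  rw [← Cardinal.two_power_aleph0, ← Cardinal.power_mul, Cardinal.aleph0_mul_aleph0]

theorem cont_regular
    (hch : ∀ κ : Cardinal.{u}, κ < Cardinal.continuum → 2 ^ κ ≤ Cardinal.continuum) :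
    Cardinal.IsRegular (𝔠 : Cardinal.{u}) := by
  refine ⟨aleph0_le_continuum, ?_⟩
  by_contra hlt
  push_neg at hlt
  have h1 : (𝔠 : Cardinal.{u}) < 𝔠 ^ Ordinal.cof (Cardinal.ord 𝔠) :=
    Cardinal.lt_power_cof_ord aleph0_le_continuum
  exact absurd (h1.trans_le (cont_pow_le hch hlt)) (lt_irrefl _)
end Arith

section Closure
variable {X : Type u} [TopologicalSpace X]

theorem mk_seqClosure_le [T2Space X] {S : Set X} (hS : #S ≤ 𝔠) : #(seqClosure S) ≤ 𝔠 := by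
  have key : ∀ y : seqClosure S, ∃ u : ℕ → S, Filter.Tendsto (fun n => (u n : X))
      Filter.atTop (nhds (y : X)) := by
    rintro ⟨y, u, hu, huy⟩
    exact ⟨fun n => ⟨u n, hu n⟩, huy⟩
  choose Φ hΦ using key
  have hinj : Function.Injective Φ := by
    intro y z hyz
    apply Subtype.ext
    refine tendsto_nhds_unique (hΦ y) ?_
    rw [hyz]; exact hΦ z
  calc #(seqClosure S) ≤ #(ℕ → S) := Cardinal.mk_le_of_injective hinj
    _ = #(ULift.{u} ℕ → S) := Cardinal.mk_congr (Equiv.arrowCongr Equiv.ulift.symm (Equiv.refl _))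
    _ = #S ^ #(ULift.{u} ℕ) := (Cardinal.power_def _ _).symm
    _ = #S ^ (ℵ₀ : Cardinal.{u}) := by rw [Cardinal.mk_denumerable (ULift.{u} ℕ)]
    _ ≤ (𝔠 : Cardinal.{u}) ^ (ℵ₀ : Cardinal.{u}) := power_le_power_right hS
    _ = 𝔠 := cont_pow_aleph0

theorem mk_closure_le [T2Space X] [SequentialSpace X] {S : Set X} (hS : #S ≤ 𝔠) :
    #(closure S) ≤ 𝔠 := by
  classical
  set step : Set X → Set X := fun T => S ∪ seqClosure T with hstepdef
  have hsub : ∀ T : Set X, T ⊆ step T := fun T =>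
    subset_union_of_subset_right subset_seqClosure S
  have hseq : ∀ T : Set X, seqClosure T ⊆ step T := fun T => subset_union_right
  have hcard : ∀ T : Set X, #T ≤ 𝔠 → #(step T) ≤ 𝔠 := by
    intro T hT
    refine (Cardinal.mk_union_le _ _).trans ?_
    have := mk_seqClosure_le (X := X) hT
    calc #S + #(seqClosure T) ≤ 𝔠 + 𝔠 := add_le_add hS this
      _ = 𝔠 := by simp
  set l : Ordinal.{u} := (Cardinal.aleph 1).ord with hl
  have hlim : Order.IsSuccLimit l := Cardinal.isSuccLimit_ord (aleph0_le_aleph 1)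
  have hcof : l.cof = Cardinal.aleph 1 := Cardinal.isRegular_aleph_one.cof_ord
  have hone : (Cardinal.aleph 1 : Cardinal.{u}) ≤ 𝔠 := by
    rw [← Cardinal.succ_aleph0]
    exact Order.succ_le_of_lt aleph0_lt_continuum
  have hA1 : IsSeqClosed (iterStepU step l) := by
    apply isSeqClosed_iterStepU hsub hseq hlim
    rw [hcof]; exact aleph0_lt_aleph_one
  have hScl : S ⊆ iterStepU step l := by
    have h0 : S ⊆ iterStep step 0 := by
      rw [iterStep_def]; exact subset_union_left
    exact h0.trans (iterStep_subset_iterStepU hlim.pos)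
  have hclosed : IsClosed (iterStepU step l) := hA1.isClosed
  have : closure S ⊆ iterStepU step l := closure_minimal hScl hclosed
  refine (Cardinal.mk_le_mk_of_subset this).trans ?_
  apply mk_iterStepU_le hcard
  rw [Cardinal.card_ord]
  exact hone
end Closure

section Counting
variable {X : Type u}

theorem mk_small_subsets
    (hch : ∀ κ : Cardinal.{u}, κ < Cardinal.continuum → 2 ^ κ ≤ Cardinal.continuum)
    {S : Set X} (hS : #S ≤ 𝔠) :
    #{B : Set X | B ⊆ S ∧ #B < 𝔠} ≤ 𝔠 := by
  set I := (𝔠 : Cardinal.{u}).ord.ToType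
  have hsub : {B : Set X | B ⊆ S ∧ #B < 𝔠} ⊆
      ⋃ i : I, {B : Set X | B ⊆ S ∧ #B ≤ (tyi i).card} := by
    rintro B ⟨hBS, hBc⟩
    have : (#B).ord < (𝔠 : Cardinal.{u}).ord := Cardinal.ord_lt_ord.2 hBc
    obtain ⟨i, hi⟩ := tyi_surj this
    refine mem_iUnion.2 ⟨i, hBS, ?_⟩
    rw [hi, Cardinal.card_ord]
  refine (Cardinal.mk_le_mk_of_subset hsub).trans ?_
  refine (Cardinal.mk_iUnion_le_sum_mk).trans ?_
  have hbound : ∀ i : I, #{B : Set X | B ⊆ S ∧ #B ≤ (tyi i).card} ≤ 𝔠 := by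
    intro i
    have h1 : #{B : Set X // B ⊆ S ∧ #B ≤ (tyi i).card} ≤ max #S ℵ₀ ^ (tyi i).card :=
      Cardinal.mk_bounded_subset_le S _
    have h2 : (max #S ℵ₀ : Cardinal.{u}) ^ (tyi i).card ≤ 𝔠 ^ (tyi i).card :=
      power_le_power_right (max_le hS aleph0_le_continuum)
    have h3 : (tyi i).card < 𝔠 := Cardinal.lt_ord.1 (tyi_lt_self i)
    exact h1.trans (h2.trans (cont_pow_le hch h3))
  calc (Cardinal.sum fun i : I => #{B : Set X | B ⊆ S ∧ #B ≤ (tyi i).card})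
      ≤ Cardinal.sum fun _ : I => 𝔠 := Cardinal.sum_le_sum _ _ hbound
    _ = #I * 𝔠 := by simp [Cardinal.sum_const']
    _ ≤ 𝔠 * 𝔠 := by
        apply mul_le_mul' _ le_rfl
        simp [I, Cardinal.mk_toType, Cardinal.card_ord]
    _ = 𝔠 := mul_eq_self aleph0_le_continuum

theorem mk_countable_subsets
    (hch : ∀ κ : Cardinal.{u}, κ < Cardinal.continuum → 2 ^ κ ≤ Cardinal.continuum)
    {S : Set X} (hS : #S ≤ 𝔠) :
    #{B : Set X | B ⊆ S ∧ B.Countable} ≤ 𝔠 := by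
  refine le_trans (Cardinal.mk_le_mk_of_subset ?_) (mk_small_subsets hch hS)
  rintro B ⟨hBS, hBc⟩
  exact ⟨hBS, lt_of_le_of_lt hBc.le_aleph0 aleph0_lt_continuum⟩

theorem mk_selUnions
    (hch : ∀ κ : Cardinal.{u}, κ < Cardinal.continuum → 2 ^ κ ≤ Cardinal.continuum)
    (𝒰 : X → Set (Set X)) (h𝒰 : ∀ x, #(𝒰 x) ≤ 𝔠) {E : Set X} (hE : #E < 𝔠) :
    #{V : Set X | ∃ g : X → Set X, (∀ y ∈ E, g y ∈ 𝒰 y) ∧ V = ⋃ y ∈ E, g y} ≤ 𝔠 := by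
  set m : (∀ y : E, {U : Set X // U ∈ 𝒰 (y : X)}) → Set X :=
    fun g => ⋃ y : E, (g y : Set X) with hm
  have hsub : {V : Set X | ∃ g : X → Set X, (∀ y ∈ E, g y ∈ 𝒰 y) ∧ V = ⋃ y ∈ E, g y}
      ⊆ range m := by
    rintro V ⟨g, hg, rfl⟩
    refine ⟨fun y => ⟨g y, hg y y.2⟩, ?_⟩
    rw [hm]
    simp only
    exact (Set.biUnion_eq_iUnion E fun y _ => g y).symm
  refine (Cardinal.mk_le_mk_of_subset hsub).trans (mk_range_le.trans ?_)
  calc #(∀ y : E, {U : Set X // U ∈ 𝒰 (y : X)})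
      = Cardinal.prod (fun y : E => #{U : Set X // U ∈ 𝒰 (y : X)}) := Cardinal.mk_pi _
    _ ≤ Cardinal.prod (fun _ : E => 𝔠) := Cardinal.prod_le_prod _ _ fun y => h𝒰 _
    _ = 𝔠 ^ #E := Cardinal.prod_const' _ _
    _ ≤ 𝔠 := cont_pow_le hch hE
end Counting

section Diag
variable {X : Type u} [TopologicalSpace X] [Nonempty X]

open scoped Classical in
/-- The diagonal transfinite choice sequence used in the main argument. -/
noncomputable def diagSeq (A : Set X) (f : X → Set X)
    (e : (𝔠 : Cardinal.{u}).ord.ToType → Set X) (i : (𝔠 : Cardinal.{u}).ord.ToType) : X :=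
  if h : (A \ (closure ((range fun j : {j // j < i} => diagSeq A f e j.1) ∪ e i) ∪
      ⋃ y ∈ (range fun j : {j // j < i} => diagSeq A f e j.1) ∪ e i, f y)).Nonempty
  then h.some else Classical.arbitrary X
termination_by i
decreasing_by all_goals exact j.2

open scoped Classical in
theorem diagSeq_def (A : Set X) (f : X → Set X)
    (e : (𝔠 : Cardinal.{u}).ord.ToType → Set X) (i : (𝔠 : Cardinal.{u}).ord.ToType) :
    diagSeq A f e i =
      (if h : (A \ (closure ((diagSeq A f e '' {j | j < i}) ∪ e i) ∪
          ⋃ y ∈ (diagSeq A f e '' {j | j < i}) ∪ e i, f y)).Nonempty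
        then h.some else Classical.arbitrary X) := by
  rw [diagSeq, Set.image_eq_range]
  rfl
end Diag

/-- (2^{<𝔠} = 𝔠) a Hausdorff sequential almost discretely Lindelöf
space with pseudocharacter at most `𝔠` has cardinality at most `𝔠`. -/
theorem stmt6 {X : Type u} [TopologicalSpace X] [T2Space X] [SequentialSpace X]
    (hch : ∀ κ : Cardinal.{u}, κ < Cardinal.continuum → 2 ^ κ ≤ Cardinal.continuum)
    (hADL : AlmostDiscretelyLindelof X)
    (hψ : ∀ x : X, ∃ 𝒰 : Set (Set X), #𝒰 ≤ Cardinal.continuum ∧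
      (∀ U ∈ 𝒰, IsOpen U ∧ x ∈ U) ∧ ⋂₀ 𝒰 = {x}) :
    #X ≤ Cardinal.continuum := by
  classical
  rcases isEmpty_or_nonempty X with hX | hX
  · simp [Cardinal.mk_eq_zero]
  -- pseudobases
  choose 𝒰0 h𝒰0card h𝒰0open h𝒰0int using hψ
  set 𝒰 : X → Set (Set X) := fun x => insert Set.univ (𝒰0 x) with h𝒰def
  have h𝒰card : ∀ x, #(𝒰 x) ≤ 𝔠 := by
    intro x
    refine Cardinal.mk_insert_le.trans ?_
    calc #(𝒰0 x) + 1 ≤ 𝔠 + 𝔠 := add_le_add (h𝒰0card x) (one_le_aleph0.trans aleph0_le_continuum)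
      _ = 𝔠 := by simp
  have h𝒰open : ∀ x, ∀ U ∈ 𝒰 x, IsOpen U ∧ x ∈ U := by
    intro x U hU
    rcases hU with rfl | hU
    · exact ⟨isOpen_univ, mem_univ x⟩
    · exact h𝒰0open x U hU
  have h𝒰int : ∀ x, ⋂₀ 𝒰 x = {x} := by
    intro x
    rw [h𝒰def]
    simp only [sInter_insert, univ_inter]
    exact h𝒰0int x
  -- witness function and closing-off operator
  set w : Set X → Set X → X := fun E V =>
    if h : ((closure E ∪ V)ᶜ).Nonempty then h.some else Classical.arbitrary X with hwdef
  set Vsets : Set X → Set (Set X) := fun E =>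
    {V : Set X | ∃ g : X → Set X, (∀ y ∈ E, g y ∈ 𝒰 y) ∧ V = ⋃ y ∈ E, g y} with hVdef
  set WSet : Set X → Set X := fun S =>
    {z : X | ∃ E V : Set X, (E ⊆ S ∧ #E < 𝔠) ∧ V ∈ Vsets E ∧ z = w E V} with hWdef
  set step : Set X → Set X := fun S => closure S ∪ WSet S with hstepdef
  have hsub : ∀ S : Set X, S ⊆ step S := fun S =>
    subset_union_of_subset_left subset_closure _
  have hseq : ∀ S : Set X, seqClosure S ⊆ step S := fun S =>
    subset_union_of_subset_left seqClosure_subset_closure _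
  have hWcard : ∀ S : Set X, #S ≤ 𝔠 → #(WSet S) ≤ 𝔠 := by
    intro S hS
    have hsubW : WSet S ⊆ ⋃ B : {B : Set X // B ⊆ S ∧ #B < 𝔠}, (w B.1) '' (Vsets B.1) := by
      rintro z ⟨E, V, hE, hV, rfl⟩
      exact mem_iUnion.2 ⟨⟨E, hE⟩, mem_image_of_mem _ hV⟩
    refine (Cardinal.mk_le_mk_of_subset hsubW).trans ?_
    refine Cardinal.mk_iUnion_le_sum_mk.trans ?_
    have hb : ∀ B : {B : Set X // B ⊆ S ∧ #B < 𝔠}, #((w B.1) '' (Vsets B.1)) ≤ 𝔠 :=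
      fun B => Cardinal.mk_image_le.trans (mk_selUnions hch 𝒰 h𝒰card B.2.2)
    calc Cardinal.sum (fun B : {B : Set X // B ⊆ S ∧ #B < 𝔠} => #((w B.1) '' (Vsets B.1)))
        ≤ Cardinal.sum (fun _ : {B : Set X // B ⊆ S ∧ #B < 𝔠} => 𝔠) :=
          Cardinal.sum_le_sum _ _ hb
      _ = #{B : Set X // B ⊆ S ∧ #B < 𝔠} * 𝔠 := by simp [Cardinal.sum_const']
      _ ≤ 𝔠 * 𝔠 := mul_le_mul' (mk_small_subsets hch hS) le_rfl
      _ = 𝔠 := mul_eq_self aleph0_le_continuum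
  have hcard : ∀ S : Set X, #S ≤ 𝔠 → #(step S) ≤ 𝔠 := by
    intro S hS
    refine (Cardinal.mk_union_le _ _).trans ?_
    calc #(closure S) + #(WSet S) ≤ 𝔠 + 𝔠 := add_le_add (mk_closure_le hS) (hWcard S hS)
      _ = 𝔠 := by simp
  -- the closed set A
  set l : Ordinal.{u} := (𝔠 : Cardinal.{u}).ord with hldef
  have hreg : Cardinal.IsRegular (𝔠 : Cardinal.{u}) := cont_regular hch
  have hlim : Order.IsSuccLimit l := Cardinal.isSuccLimit_ord aleph0_le_continuum
  have hcof : l.cof = 𝔠 := hreg.cof_ord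
  set A : Set X := iterStepU step l with hAdef
  have hAcard : #A ≤ 𝔠 := mk_iterStepU_le hcard (by rw [Cardinal.card_ord])
  have hAseq : IsSeqClosed A := by
    apply isSeqClosed_iterStepU hsub hseq hlim
    rw [hcof]; exact aleph0_lt_continuum
  have hAclosed : IsClosed A := hAseq.isClosed
  -- reflection property of A
  have hrefl : ∀ E : Set X, E ⊆ A → #E < 𝔠 → ∀ V ∈ Vsets E,
      A ⊆ closure E ∪ V → ∀ z : X, z ∈ closure E ∪ V := by
    intro E hEA hEc V hV hAV z
    by_contra hz
    have hne : ((closure E ∪ V)ᶜ).Nonempty := ⟨z, hz⟩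
    have hw : w E V ∈ (closure E ∪ V)ᶜ := by
      rw [hwdef]; simp only [dif_pos hne]; exact hne.some_mem
    obtain ⟨o, hol, hEo⟩ := small_subset_iterStep hsub hlim E hEA (by rwa [hcof])
    have hwA : w E V ∈ A := by
      have h1 : E ⊆ iterStepU step (o + 1) :=
        hEo.trans (iterStep_subset_iterStepU (Order.lt_succ o))
      have h2 : w E V ∈ WSet (iterStepU step (o + 1)) := ⟨E, V, ⟨h1, hEc⟩, hV, rfl⟩
      have h3 : WSet (iterStepU step (o + 1)) ⊆ iterStep step (o + 1) := by
        rw [iterStep_def]; exact subset_union_right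
      exact iterStep_subset_iterStepU (hlim.succ_lt hol) (h3 h2)
    exact hw (hAV hwA)
  -- main claim : X ⊆ A
  have hXA : ∀ p : X, p ∈ A := by
    intro p
    by_contra hp
    -- choice of pseudobase elements avoiding p
    set f : X → Set X := fun x =>
      if h : ∃ U, U ∈ 𝒰 x ∧ p ∉ U then h.choose else univ with hfdef
    have hf : ∀ x : X, x ≠ p → f x ∈ 𝒰 x ∧ p ∉ f x := by
      intro x hxp
      have hex : ∃ U, U ∈ 𝒰 x ∧ p ∉ U := by
        by_contra hno
        push_neg at hno
        have : p ∈ ⋂₀ 𝒰 x := fun U hU => hno U hU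
        rw [h𝒰int x] at this
        exact hxp (this.symm)
      rw [hfdef]; simp only [dif_pos hex]; exact hex.choose_spec
    have hfA : ∀ x ∈ A, f x ∈ 𝒰 x ∧ p ∉ f x := fun x hx =>
      hf x (fun h => hp (h ▸ hx))
    -- enumeration of countable subsets of A
    set 𝒩 : Set (Set X) := {N : Set X | N ⊆ A ∧ N.Countable} with h𝒩def
    have h𝒩card : #𝒩 ≤ 𝔠 := mk_countable_subsets hch hAcard
    have h𝒩I : #𝒩 ≤ #l.ToType := by rwa [Cardinal.mk_toType, Cardinal.card_ord]
    obtain ⟨j⟩ := Cardinal.le_def _ _ |>.1 h𝒩I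
    set e : l.ToType → Set X := fun i =>
      if h : ∃ N : 𝒩, j N = i then ((h.choose : 𝒩) : Set X) else ∅ with hedef
    have he1 : ∀ i, e i ⊆ A ∧ (e i).Countable := by
      intro i
      rw [hedef]
      by_cases h : ∃ N : 𝒩, j N = i
      · simp only [dif_pos h]; exact h.choose.2
      · simp only [dif_neg h]; exact ⟨empty_subset _, countable_empty⟩
    have he2 : ∀ N ∈ 𝒩, ∃ i, e i = N := by
      intro N hN
      refine ⟨j ⟨N, hN⟩, ?_⟩
      have hex : ∃ N' : 𝒩, j N' = j ⟨N, hN⟩ := ⟨⟨N, hN⟩, rfl⟩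
      rw [hedef]
      simp only [dif_pos hex]
      have : hex.choose = ⟨N, hN⟩ := j.injective hex.choose_spec
      rw [this]
    -- the diagonal sequence
    set x : l.ToType → X := diagSeq A f e with hxdef
    set E' : l.ToType → Set X := fun i => (x '' {j : l.ToType | j < i}) ∪ e i with hE'def
    set Bad : l.ToType → Set X := fun i =>
      A \ (closure (E' i) ∪ ⋃ y ∈ E' i, f y) with hBaddef
    have hxeq : ∀ i, x i = if h : (Bad i).Nonempty then h.some else Classical.arbitrary X :=
      fun i => diagSeq_def A f e i
    by_cases hall : ∀ i, (Bad i).Nonempty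
    · -- build the discrete set and contradict via ADL
      have hx : ∀ i, x i ∈ Bad i := by
        intro i
        rw [hxeq i, dif_pos (hall i)]
        exact (hall i).some_mem
      have hxA : ∀ i, x i ∈ A := fun i => (hx i).1
      have hxcl : ∀ i, x i ∉ closure (E' i) := fun i hc => (hx i).2 (Or.inl hc)
      have hxU : ∀ i, x i ∉ ⋃ y ∈ E' i, f y := fun i hc => (hx i).2 (Or.inr hc)
      set D : Set X := range x with hDdef
      have hD : IsDiscreteSubset D := by
        rintro z ⟨i, rfl⟩
        refine ⟨f (x i) ∩ (closure (E' i))ᶜ,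
          ((h𝒰open _ _ (hfA _ (hxA i)).1).1).inter isClosed_closure.isOpen_compl, ?_⟩
        ext d
        constructor
        · rintro ⟨⟨hdf, hdcl⟩, ⟨k, rfl⟩⟩
          rcases lt_trichotomy k i with hki | hki | hki
          · have hkE : x k ∈ E' i := Set.mem_union_left _ (mem_image_of_mem x hki)
            exact absurd (subset_closure hkE) hdcl
          · rw [hki]; rfl
          · exfalso
            apply hxU k
            have hiE : x i ∈ E' k := Set.mem_union_left _ (mem_image_of_mem x hki)
            exact mem_biUnion hiE hdf
        · rintro rfl
          exact ⟨⟨(h𝒰open _ _ (hfA _ (hxA i)).1).2, hxcl i⟩, mem_range_self i⟩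
      obtain ⟨L, hL, hDL⟩ := hADL D hD
      set U' : Option A → Set X := fun o => o.elim Aᶜ (fun a => f a) with hU'def
      have hU'open : ∀ o : Option A, IsOpen (U' o) := by
        rintro (_ | a)
        · exact hAclosed.isOpen_compl
        · exact (h𝒰open _ _ (hfA _ a.2).1).1
      have hcover : L ⊆ ⋃ o : Option A, U' o := by
        intro z _
        by_cases hz : z ∈ A
        · exact mem_iUnion.2 ⟨some ⟨z, hz⟩, (h𝒰open _ _ (hfA _ hz).1).2⟩
        · exact mem_iUnion.2 ⟨none, hz⟩
      obtain ⟨r, hrc, hrcov⟩ := hL.elim_countable_subcover U' hU'open hcover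
      set N : Set X := Subtype.val '' {a : A | some a ∈ r} with hNdef
      have hN𝒩 : N ∈ 𝒩 := by
        constructor
        · rintro _ ⟨a, _, rfl⟩; exact a.2
        · exact ((hrc.preimage (Option.some_injective _)).image _)
      obtain ⟨i0, hei0⟩ := he2 N hN𝒩
      have hxi0L : x i0 ∈ L := hDL (mem_range_self i0)
      obtain ⟨κ, hκr, hκmem⟩ := mem_iUnion₂.1 (hrcov hxi0L)
      rcases κ with _ | a
      · exact hκmem (hxA i0)
      · apply hxU i0
        have haN : (a : X) ∈ N := ⟨a, hκr, rfl⟩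
        have haE : (a : X) ∈ E' i0 := Set.mem_union_right _ (hei0 ▸ haN)
        exact mem_biUnion haE hκmem
    · -- obstruction: reflection gives a contradiction
      push_neg at hall
      obtain ⟨i₀, hi₀⟩ := hall
      set S0 : Set l.ToType := {i | Bad i = ∅} with hS0def
      have hS0ne : S0.Nonempty := ⟨i₀, hi₀⟩
      have wf : WellFounded ((· < ·) : l.ToType → l.ToType → Prop) := IsWellFounded.wf
      set imin := wf.min S0 hS0ne with himindef
      have himin : Bad imin = ∅ := wf.min_mem S0 hS0ne
      have hminlt : ∀ k, k < imin → k ∉ S0 := fun k hk hkS => wf.not_lt_min S0 hkS hk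
      have hxj : ∀ k, k < imin → x k ∈ Bad k := by
        intro k hk
        have hkne : (Bad k).Nonempty :=
          Set.nonempty_iff_ne_empty.2 (hminlt k hk)
        rw [hxeq k, dif_pos hkne]
        exact hkne.some_mem
      have hEA : E' imin ⊆ A := by
        rintro y (⟨k, hk, rfl⟩ | hy)
        · exact (hxj k hk).1
        · exact (he1 imin).1 hy
      have hEcard : #(E' imin) < 𝔠 := by
        refine lt_of_le_of_lt (Cardinal.mk_union_le _ _) ?_
        apply Cardinal.add_lt_of_lt aleph0_le_continuum
        · refine lt_of_le_of_lt Cardinal.mk_image_le ?_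
          have : #{j : l.ToType | j < imin} = (tyi imin).card := (card_tyi imin).symm
          rw [this]
          exact Cardinal.lt_ord.1 (tyi_lt_self imin)
        · exact lt_of_le_of_lt (he1 imin).2.le_aleph0 aleph0_lt_continuum
      have hV : (⋃ y ∈ E' imin, f y) ∈ Vsets (E' imin) :=
        ⟨f, fun y hy => (hfA y (hEA hy)).1, rfl⟩
      have hcov : A ⊆ closure (E' imin) ∪ ⋃ y ∈ E' imin, f y := by
        exact diff_eq_empty.1 himin
      have hp2 := hrefl (E' imin) hEA hEcard _ hV hcov p
      rcases hp2 with hp2 | hp2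
      · have : closure (E' imin) ⊆ A := by
          rw [← hAclosed.closure_eq]
          exact closure_mono hEA
        exact hp (this hp2)
      · obtain ⟨y, hyE, hyp⟩ := mem_iUnion₂.1 hp2
        exact (hfA y (hEA hyE)).2 hyp
  have huniv : (univ : Set X) ⊆ A := fun z _ => hXA z
  calc #X = #(univ : Set X) := Cardinal.mk_univ.symm
    _ ≤ #A := Cardinal.mk_le_mk_of_subset huniv
    _ ≤ 𝔠 := hAcard
end

section
/- Every Hausdorff cellular-Lindelöf first-countable space has cardinality at most 2^𝔠. -/
open Cardinal Set Topology

universe u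

open Cardinal Set Topology

variable {X : Type u}

noncomputable def myChain (o : Ordinal.{u}) (step : Set X → Set X) : o.ToType → Set X
  | i => step (⋃ j : {j : o.ToType // j < i}, myChain o step j.1)
termination_by i => i
decreasing_by exact j.2

theorem myChain_eq (o : Ordinal.{u}) (step : Set X → Set X) (i : o.ToType) :
    myChain o step i = step (⋃ j : {j : o.ToType // j < i}, myChain o step j.1) := by
  rw [myChain]

theorem myChain_mono (o : Ordinal.{u}) (step : Set X → Set X)
    (hstep : ∀ S, S ⊆ step S) {j i : o.ToType} (h : j < i) :
    myChain o step j ⊆ myChain o step i := by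
  rw [myChain_eq o step i]
  exact subset_trans (subset_iUnion (fun j : {j : o.ToType // j < i} => myChain o step j.1) ⟨j, h⟩)
    (hstep _)

theorem card_subtype_lt (o : Ordinal.{u}) (i : o.ToType) :
    #{j : o.ToType // j < i} ≤ o.card := by
  rw [← mk_toType o]; exact mk_subtype_le _

theorem exists_gt_of_small (o : Ordinal.{u}) [Nonempty o.ToType] (S : Set o.ToType)
    (h : #S < o.cof) : ∃ a, ∀ b ∈ S, b < a := by
  rw [← Ordinal.cof_toType] at h
  exact not_isCofinal_iff.1 (fun hc => (Order.cof_le hc).not_gt h)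

theorem myChain_card (o : Ordinal.{u}) (step : Set X → Set X) (κ : Cardinal.{u})
    (hκ : ℵ₀ ≤ κ) (hcard : o.card ≤ κ)
    (hstep : ∀ S : Set X, #S ≤ κ → #(step S) ≤ κ) (i : o.ToType) :
    #(myChain o step i) ≤ κ := by
  induction i using WellFoundedLT.induction with
  | ind i IH =>
    rw [myChain_eq]
    apply hstep
    calc #(⋃ j : {j : o.ToType // j < i}, myChain o step j.1)
        ≤ #{j : o.ToType // j < i} * ⨆ j : {j : o.ToType // j < i}, #(myChain o step j.1) :=
          mk_iUnion_le _
      _ ≤ κ * κ := mul_le_mul' ((card_subtype_lt o i).trans hcard)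
          (ciSup_le' fun j => IH j.1 j.2)
      _ = κ := mul_eq_self hκ

theorem myChain_subset_of (o : Ordinal.{u}) (step : Set X → Set X) (L : Set X)
    (hstep : ∀ S : Set X, S ⊆ L → step S ⊆ L) (i : o.ToType) :
    myChain o step i ⊆ L := by
  induction i using WellFoundedLT.induction with
  | ind i IH =>
    rw [myChain_eq]
    exact hstep _ (iUnion_subset fun j => IH j.1 j.2)

/-- A basic open neighbourhood assignment in a first countable space. -/
theorem exists_basic (X : Type u) [TopologicalSpace X] [FirstCountableTopology X] :
    ∃ b : X → ℕ → Set X, ∀ x, (∀ n, IsOpen (b x n) ∧ x ∈ b x n) ∧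
      ∀ V ∈ nhds x, ∃ n, b x n ⊆ V := by
  have h : ∀ x : X, ∃ s : ℕ → Set X, (nhds x).HasAntitoneBasis s :=
    fun x => (nhds x).exists_antitone_basis
  choose s hs using h
  refine ⟨fun x n => interior (s x n), fun x => ⟨fun n => ⟨isOpen_interior, ?_⟩, fun V hV => ?_⟩⟩
  · exact mem_interior_iff_mem_nhds.2 ((hs x).mem n)
  · obtain ⟨n, -, hn⟩ := (hs x).toHasBasis.mem_iff.1 hV
    exact ⟨n, interior_subset.trans hn⟩

theorem card_closure_le {X : Type u} [TopologicalSpace X] [T2Space X] [FirstCountableTopology X]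
    (S : Set X) : #(closure S) ≤ #S ^ (ℵ₀ : Cardinal.{u}) := by
  have h : ∀ y : closure S, ∃ u : ℕ → X, (∀ n, u n ∈ S) ∧
      Filter.Tendsto u Filter.atTop (nhds (y : X)) :=
    fun y => mem_closure_iff_seq_limit.1 y.2
  choose u hu htu using h
  have hinj : Function.Injective (fun y : closure S => fun n => (⟨u y n, hu y n⟩ : S)) := by
    intro y z hyz
    have : u y = u z := funext fun n => congrArg Subtype.val (congrFun hyz n)
    exact Subtype.ext (tendsto_nhds_unique (htu y) (this ▸ htu z))
  calc #(closure S) ≤ #(ℕ → S) := mk_le_of_injective hinj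
    _ = #S ^ (ℵ₀ : Cardinal.{u}) := by
        rw [mk_arrow]; simp [Cardinal.lift_id, Cardinal.mk_nat]

section Arh

variable {X : Type u} [TopologicalSpace X]

/-- Union of the basic sets listed by a countable "test". -/
def usetsA (b : X → ℕ → Set X) (g : ℕ → Option (X × ℕ)) : Set X :=
  ⋃ n, ((g n).elim ∅ fun p => b p.1 p.2)

def GoodA (b : X → ℕ → Set X) (L S : Set X) (g : ℕ → Option (X × ℕ)) : Prop :=
  (∀ n p, g n = some p → p.1 ∈ S) ∧ S ⊆ usetsA b g ∧ (L \ usetsA b g).Nonempty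

open scoped Classical in
noncomputable def witA [Nonempty X] (b : X → ℕ → Set X) (L : Set X)
    (g : ℕ → Option (X × ℕ)) : X :=
  if h : (L \ usetsA b g).Nonempty then h.choose else Classical.arbitrary X

open scoped Classical in
theorem witA_mem [Nonempty X] (b : X → ℕ → Set X) (L : Set X) (g : ℕ → Option (X × ℕ))
    (h : (L \ usetsA b g).Nonempty) : witA b L g ∈ L \ usetsA b g := by
  rw [witA, dif_pos h]; exact h.choose_spec

noncomputable def stepA [Nonempty X] (b : X → ℕ → Set X) (L : Set X) (S : Set X) : Set X :=
  (S ∪ (L ∩ closure S)) ∪ (witA b L '' {g | GoodA b L S g})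

theorem subset_stepA [Nonempty X] (b : X → ℕ → Set X) (L S : Set X) : S ⊆ stepA b L S :=
  (subset_union_left).trans subset_union_left

theorem stepA_subset_L [Nonempty X] (b : X → ℕ → Set X) (L S : Set X) (hS : S ⊆ L) :
    stepA b L S ⊆ L := by
  apply union_subset (union_subset hS inter_subset_left)
  rintro - ⟨g, hg, rfl⟩
  exact (witA_mem b L g hg.2.2).1

theorem stepA_card [Nonempty X] [T2Space X] [FirstCountableTopology X]
    (b : X → ℕ → Set X) (L S : Set X) (hS : #S ≤ continuum.{u}) :
    #(stepA b L S) ≤ continuum.{u} := by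
  have h1 : #(L ∩ closure S : Set X) ≤ continuum.{u} := by
    refine le_trans (mk_le_mk_of_subset inter_subset_right) ?_
    refine le_trans (card_closure_le S) ?_
    calc #S ^ (ℵ₀ : Cardinal.{u}) ≤ continuum ^ (ℵ₀ : Cardinal.{u}) := power_le_power_right hS
      _ = continuum := continuum_power_aleph0
  have h2 : #(witA b L '' {g | GoodA b L S g} : Set X) ≤ continuum.{u} := by
    refine le_trans mk_image_le ?_
    have hrange : {g | GoodA b L S g} ⊆
        range (fun (h : ℕ → Option (S × ℕ)) =>
          (fun n => (h n).map (fun p => ((p.1 : X), p.2)))) := by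
      intro g hg
      refine ⟨fun n => (g n).pmap (fun p hp => ((⟨p.1, hg.1 n p hp⟩ : S), p.2))
        (fun a ha => ha), ?_⟩
      funext n
      rcases hgn : g n with - | p <;> simp [hgn]
    calc #{g | GoodA b L S g} ≤ #(range (fun (h : ℕ → Option (S × ℕ)) =>
            (fun n => (h n).map (fun p => ((p.1 : X), p.2))))) := mk_le_mk_of_subset hrange
      _ ≤ #(ℕ → Option (S × ℕ)) := mk_range_le
      _ ≤ continuum.{u} := by
          have hO : #(Option (S × ℕ)) ≤ continuum.{u} := by
            rw [mk_option, Cardinal.mk_prod]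
            simp only [Cardinal.mk_nat, Cardinal.lift_aleph0, Cardinal.lift_uzero,
              Cardinal.lift_id]
            calc #S * ℵ₀ + 1 ≤ continuum * continuum + continuum :=
                  add_le_add (mul_le_mul' hS aleph0_le_continuum)
                    (le_trans one_le_aleph0 aleph0_le_continuum)
              _ = continuum := by
                  rw [mul_eq_self aleph0_le_continuum, add_eq_self aleph0_le_continuum]
          rw [mk_arrow]
          simp only [Cardinal.mk_nat, Cardinal.lift_aleph0, Cardinal.lift_uzero,
            Cardinal.lift_id]
          calc #(Option (S × ℕ)) ^ (ℵ₀ : Cardinal.{u}) ≤ continuum ^ (ℵ₀ : Cardinal.{u}) :=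
                power_le_power_right hO
            _ = continuum := continuum_power_aleph0
  calc #(stepA b L S) ≤ #((S ∪ (L ∩ closure S) : Set X)) +
        #(witA b L '' {g | GoodA b L S g} : Set X) := mk_union_le _ _
    _ ≤ (#S + #(L ∩ closure S : Set X)) + continuum := add_le_add (mk_union_le _ _) h2
    _ ≤ (continuum + continuum) + continuum := add_le_add (add_le_add hS h1) le_rfl
    _ = continuum := by rw [add_eq_self aleph0_le_continuum, add_eq_self aleph0_le_continuum]

theorem lindelof_card_le_continuum [T2Space X] [FirstCountableTopology X] {L : Set X}
    (hL : IsLindelof L) : #L ≤ Cardinal.continuum.{u} := by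
  classical
  rcases L.eq_empty_or_nonempty with rfl | hLne
  · simp
  haveI : Nonempty X := ⟨hLne.choose⟩
  obtain ⟨b, hb⟩ := exists_basic X
  set o : Ordinal.{u} := (aleph 1).ord with ho
  have hocard : o.card = aleph 1 := card_ord _
  have hocof : o.cof = aleph 1 := (isRegular_aleph_one).cof_eq
  haveI : Nonempty o.ToType := by
    rw [Ordinal.nonempty_toType_iff]
    intro h
    have h2 : (aleph 1) = 0 := by rw [← hocard, h, Ordinal.card_zero]
    have h3 := aleph0_lt_aleph_one
    rw [h2] at h3
    exact (lt_irrefl _ (h3.trans_le zero_le))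
  set F : o.ToType → Set X := myChain o (stepA b L) with hF
  have hFL : ∀ i, F i ⊆ L := myChain_subset_of o (stepA b L) L (stepA_subset_L b L)
  have hFcard : ∀ i, #(F i) ≤ continuum :=
    myChain_card o (stepA b L) continuum aleph0_le_continuum
      (by rw [hocard]; exact aleph_one_le_continuum) (stepA_card b L)
  have hFmono : ∀ {j i : o.ToType}, j < i → F j ⊆ F i :=
    fun h => myChain_mono o (stepA b L) (subset_stepA b L) h
  set A : Set X := ⋃ i, F i with hA
  have hAL : A ⊆ L := iUnion_subset hFL
  -- A is closed in L
  have hclosedA : L ∩ closure A ⊆ A := by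
    rintro y ⟨hyL, hycl⟩
    obtain ⟨u, hu, htu⟩ := mem_closure_iff_seq_limit.1 hycl
    have hstage : ∀ n, ∃ i, u n ∈ F i := fun n => mem_iUnion.1 (hu n)
    choose ix hix using hstage
    obtain ⟨a, ha⟩ := exists_gt_of_small o (range ix)
      (by rw [hocof]; exact lt_of_le_of_lt (countable_range ix).le_aleph0 aleph0_lt_aleph_one)
    have huFa : ∀ n, u n ∈ F a := fun n => hFmono (ha _ (mem_range_self n)) (hix n)
    have hyclFa : y ∈ closure (F a) := mem_closure_of_tendsto htu (Filter.Eventually.of_forall huFa)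
    obtain ⟨a', ha'⟩ := exists_gt_of_small o ({a} : Set o.ToType)
      (by rw [hocof]; exact lt_of_le_of_lt (countable_singleton a).le_aleph0 aleph0_lt_aleph_one)
    have haa' : a < a' := ha' a rfl
    have hy : y ∈ F a' := by
      rw [hF, myChain_eq]
      refine Or.inl (Or.inr ⟨hyL, ?_⟩)
      refine closure_mono ?_ hyclFa
      exact subset_iUnion (fun j : {j : o.ToType // j < a'} => myChain o (stepA b L) j.1) ⟨a, haa'⟩
    exact mem_iUnion.2 ⟨a', hy⟩
  have hAeq : A = L ∩ closure A :=
    Subset.antisymm (subset_inter hAL subset_closure) hclosedA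
  have hALin : IsLindelof A := by rw [hAeq]; exact hL.inter_right isClosed_closure
  -- L ⊆ A
  have hLA : L ⊆ A := by
    by_contra hq
    obtain ⟨q, hqL, hqA⟩ : ∃ q, q ∈ L ∧ q ∉ A := by
      rcases not_subset.1 hq with ⟨q, h1, h2⟩; exact ⟨q, h1, h2⟩
    have hsep : ∀ x : A, ∃ m : ℕ, q ∉ closure (b x m) := by
      intro x
      have hxq : (x : X) ≠ q := fun h => hqA (h ▸ x.2)
      obtain ⟨P, Q, hP, hQ, hxP, hqQ, hPQ⟩ := t2_separation hxq
      obtain ⟨m, hm⟩ := (hb (x : X)).2 P (hP.mem_nhds hxP)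
      refine ⟨m, fun hqc => ?_⟩
      obtain ⟨z, hz1, hz2⟩ := (mem_closure_iff.1 hqc) Q hQ hqQ
      exact absurd (hm hz2) (fun h => hPQ.ne_of_mem h hz1 rfl)
    choose m hm using hsep
    have hcover : A ⊆ ⋃ x : A, b x (m x) := fun a ha =>
      mem_iUnion.2 ⟨⟨a, ha⟩, ((hb a).1 (m ⟨a, ha⟩)).2⟩
    obtain ⟨t, htc, htcover⟩ := hALin.elim_countable_subcover (fun x : A => b x (m x))
      (fun x => ((hb (x : X)).1 (m x)).1) hcover
    set t' : Set (Option (X × ℕ)) := insert none ((fun x : A => some ((x : X), m x)) '' t)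
      with ht'
    have ht'c : t'.Countable := (htc.image _).insert _
    obtain ⟨f, hf⟩ := Set.Countable.exists_surjective ⟨none, mem_insert _ _⟩ ht'c
    set g : ℕ → Option (X × ℕ) := fun n => (f n : Option (X × ℕ)) with hg
    have husetsg : usetsA b g = ⋃ x ∈ t, b (x : X) (m x) := by
      apply Subset.antisymm
      · refine iUnion_subset fun n => ?_
        rcases hfn : (f n : Option (X × ℕ)) with - | p
        · simp [hg, hfn]
        · have hmem : some p ∈ t' := by rw [← hfn]; exact (f n).2
          rcases mem_insert_iff.1 hmem with h | ⟨x, hx, hxe⟩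
          · exact absurd h (by simp)
          · have hxp : ((x : X), m x) = p := Option.some_injective _ hxe
            intro z hz
            simp only [hg, hfn, Option.elim] at hz
            rw [← hxp] at hz
            exact mem_biUnion hx hz
      · intro z hz
        obtain ⟨x, hx, hzx⟩ := by simpa only [mem_iUnion, exists_prop] using hz
        obtain ⟨n, hn⟩ := hf ⟨some ((x : X), m x), mem_insert_of_mem _ ⟨x, hx, rfl⟩⟩
        have hfn : (f n : Option (X × ℕ)) = some ((x : X), m x) := by rw [hn]
        refine mem_iUnion.2 ⟨n, ?_⟩
        simp only [hg, hfn, Option.elim]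
        exact hzx
    -- stages of the countably many centers
    haveI : Countable t := countable_coe_iff.2 htc
    have hstaget : ∀ x : t, ∃ i, ((x : A) : X) ∈ F i := fun x => mem_iUnion.1 (x.1).2
    choose jx hjx using hstaget
    obtain ⟨i, hi⟩ := exists_gt_of_small o (range jx)
      (by rw [hocof]; exact lt_of_le_of_lt (countable_range jx).le_aleph0 aleph0_lt_aleph_one)
    have hGoodg : GoodA b L (⋃ j : {j : o.ToType // j < i}, F j) g := by
      refine ⟨?_, ?_, ?_⟩
      · intro n p hp
        have hfn : (f n : Option (X × ℕ)) = some p := hp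
        have hmem : some p ∈ t' := by rw [← hfn]; exact (f n).2
        rcases mem_insert_iff.1 hmem with h | ⟨x, hx, hxe⟩
        · exact absurd h (by simp)
        · have hxp : ((x : X), m x) = p := Option.some_injective _ hxe
          rw [← hxp]
          exact mem_iUnion.2 ⟨⟨jx ⟨x, hx⟩, hi _ (mem_range_self _)⟩, hjx ⟨x, hx⟩⟩
      · rw [husetsg]
        exact (iUnion_subset fun (j : {j : o.ToType // j < i}) =>
          (subset_iUnion F j.1)).trans htcover
      · refine ⟨q, hqL, ?_⟩
        rw [husetsg]
        intro hq'
        obtain ⟨x, hx, hqx⟩ := by simpa only [mem_iUnion, exists_prop] using hq'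
        exact hm x (subset_closure hqx)
    have hwitF : witA b L g ∈ F i := by
      rw [hF, myChain_eq]
      exact Or.inr ⟨g, hGoodg, rfl⟩
    have h1 := witA_mem b L g hGoodg.2.2
    refine h1.2 ?_
    rw [husetsg]
    exact htcover ((subset_iUnion F i) hwitF)
  have hcard : #A ≤ continuum := by
    calc #A ≤ #(o.ToType) * ⨆ i, #(F i) := mk_iUnion_le _
      _ ≤ continuum * continuum := by
          refine mul_le_mul' ?_ (ciSup_le' hFcard)
          rw [mk_toType, hocard]; exact aleph_one_le_continuum
      _ = continuum := mul_eq_self aleph0_le_continuum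
  exact le_trans (mk_le_mk_of_subset hLA) hcard

end Arh

section HJ

variable {X : Type u} [TopologicalSpace X]

theorem shrink_lemma (hc : ∀ 𝒰 : Set (Set X), IsCellularFamily 𝒰 → #𝒰 ≤ continuum.{u})
    {ι : Type u} (V : ι → Set X) (hV : ∀ i, IsOpen (V i)) :
    ∃ s : Set ι, #s ≤ continuum.{u} ∧ (⋃ i, V i) ⊆ closure (⋃ i ∈ s, V i) := by
  classical
  have hchains : ∀ c ⊆ {𝒟 : Set (Set X) | (∀ E ∈ 𝒟, IsOpen E ∧ E.Nonempty ∧ ∃ i, E ⊆ V i) ∧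
      𝒟.PairwiseDisjoint id}, IsChain (fun x1 x2 => x1 ⊆ x2) c →
      ∃ ub ∈ {𝒟 : Set (Set X) | (∀ E ∈ 𝒟, IsOpen E ∧ E.Nonempty ∧ ∃ i, E ⊆ V i) ∧
      𝒟.PairwiseDisjoint id}, ∀ s ∈ c, s ⊆ ub := by
    intro c hc hchain
    refine ⟨⋃₀ c, ⟨fun E hE => ?_, fun E hE E' hE' hne => ?_⟩, fun s hs => subset_sUnion_of_mem hs⟩
    · obtain ⟨d, hd, hEd⟩ := hE
      exact (hc hd).1 E hEd
    · obtain ⟨d, hd, hEd⟩ := hE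
      obtain ⟨d', hd', hEd'⟩ := hE'
      rcases hchain.total hd hd' with h | h
      · exact (hc hd').2 (h hEd) hEd' hne
      · exact (hc hd).2 hEd (h hEd') hne
  obtain ⟨D, hDP, hDmax⟩ := zorn_subset _ hchains
  have hDcell : IsCellularFamily D :=
    ⟨fun E hE => ⟨(hDP.1 E hE).1, (hDP.1 E hE).2.1⟩, hDP.2⟩
  have hsel : ∀ E : D, ∃ i, (E : Set X) ⊆ V i := fun E => (hDP.1 E E.2).2.2
  choose ind hind using hsel
  refine ⟨range ind, le_trans mk_range_le (hc D hDcell), ?_⟩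
  intro z hz
  obtain ⟨i₀, hzi⟩ := mem_iUnion.1 hz
  rw [mem_closure_iff]
  intro N hN hzN
  by_contra hne
  rw [not_nonempty_iff_eq_empty] at hne
  have hNs : ∀ E : D, N ∩ (E : Set X) = ∅ := by
    intro E
    rw [eq_empty_iff_forall_notMem]
    intro w ⟨hwN, hwE⟩
    have : w ∈ N ∩ ⋃ i ∈ range ind, V i :=
      ⟨hwN, mem_biUnion (mem_range_self E) (hind E hwE)⟩
    rw [hne] at this
    exact this
  set E : Set X := N ∩ V i₀ with hE
  have hEne : E.Nonempty := ⟨z, hzN, hzi⟩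
  have hED : E ∉ D := by
    intro hmem
    have := hNs ⟨E, hmem⟩
    rw [eq_empty_iff_forall_notMem] at this
    exact this z ⟨hzN, hzN, hzi⟩
  have hP' : insert E D ∈ {𝒟 : Set (Set X) | (∀ E ∈ 𝒟, IsOpen E ∧ E.Nonempty ∧ ∃ i, E ⊆ V i) ∧
      𝒟.PairwiseDisjoint id} := by
    constructor
    · rintro F (rfl | hF)
      · exact ⟨hN.inter (hV i₀), hEne, i₀, inter_subset_right⟩
      · exact hDP.1 F hF
    · refine hDP.2.insert fun F hF hne' => ?_
      rw [disjoint_iff_inter_eq_empty]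
      have := hNs ⟨F, hF⟩
      rw [eq_empty_iff_forall_notMem] at this ⊢
      rintro w ⟨⟨hw1, -⟩, hw2⟩
      exact this w ⟨hw1, hw2⟩
  have := hDmax hP' (subset_insert E D) (mem_insert E D)
  exact hED this

/-- An index type of cardinality continuum. -/
def IndexC : Type u := (Cardinal.continuum.{u}).ord.ToType

theorem mk_IndexC : #(IndexC.{u}) = continuum.{u} := by
  rw [IndexC, mk_toType, card_ord]

def usetsH (b : X → ℕ → Set X) (g : ℕ → IndexC.{u} → Option (X × ℕ)) (n : ℕ) : Set X :=
  ⋃ c, ((g n c).elim ∅ fun p => b p.1 p.2)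

def GoodH (b : X → ℕ → Set X) (S : Set X) (g : ℕ → IndexC.{u} → Option (X × ℕ)) : Prop :=
  (∀ n c p, g n c = some p → p.1 ∈ S) ∧ ((⋃ n, closure (usetsH b g n))ᶜ).Nonempty

open scoped Classical in
noncomputable def witH [Nonempty X] (b : X → ℕ → Set X)
    (g : ℕ → IndexC.{u} → Option (X × ℕ)) : X :=
  if h : ((⋃ n, closure (usetsH b g n))ᶜ).Nonempty then h.choose else Classical.arbitrary X

open scoped Classical in
theorem witH_mem [Nonempty X] (b : X → ℕ → Set X) (g : ℕ → IndexC.{u} → Option (X × ℕ))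
    (h : ((⋃ n, closure (usetsH b g n))ᶜ).Nonempty) :
    witH b g ∈ (⋃ n, closure (usetsH b g n))ᶜ := by
  rw [witH, dif_pos h]; exact h.choose_spec

noncomputable def stepH [Nonempty X] (b : X → ℕ → Set X) (S : Set X) : Set X :=
  S ∪ (witH b '' {g | GoodH b S g})

theorem subset_stepH [Nonempty X] (b : X → ℕ → Set X) (S : Set X) : S ⊆ stepH b S :=
  subset_union_left

theorem stepH_card [Nonempty X] (b : X → ℕ → Set X) (S : Set X)
    (hS : #S ≤ 2 ^ continuum.{u}) : #(stepH b S) ≤ 2 ^ continuum.{u} := by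
  have haleph : (ℵ₀ : Cardinal.{u}) ≤ 2 ^ continuum.{u} :=
    aleph0_le_continuum.trans (cantor continuum.{u}).le
  have h2 : #(witH b '' {g | GoodH b S g} : Set X) ≤ 2 ^ continuum.{u} := by
    refine le_trans mk_image_le ?_
    have hrange : {g | GoodH b S g} ⊆
        range (fun (h : ℕ → IndexC.{u} → Option (S × ℕ)) =>
          (fun n c => (h n c).map (fun p => ((p.1 : X), p.2)))) := by
      intro g hg
      refine ⟨fun n c => (g n c).pmap (fun p hp => ((⟨p.1, hg.1 n c p hp⟩ : S), p.2))
        (fun a ha => ha), ?_⟩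
      funext n c
      rcases hgn : g n c with - | p <;> simp [hgn]
    have hO : #(Option (S × ℕ)) ≤ 2 ^ continuum.{u} := by
      rw [mk_option, Cardinal.mk_prod]
      simp only [Cardinal.mk_nat, Cardinal.lift_aleph0, Cardinal.lift_uzero, Cardinal.lift_id]
      calc #S * ℵ₀ + 1 ≤ (2 ^ continuum.{u}) * (2 ^ continuum.{u}) + 2 ^ continuum.{u} :=
            add_le_add (mul_le_mul' hS haleph) (le_trans one_le_aleph0 haleph)
        _ = 2 ^ continuum.{u} := by rw [mul_eq_self haleph, add_eq_self haleph]
    calc #{g | GoodH b S g} ≤ _ := mk_le_mk_of_subset hrange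
      _ ≤ #(ℕ → IndexC.{u} → Option (S × ℕ)) := mk_range_le
      _ ≤ 2 ^ continuum.{u} := by
          rw [mk_arrow]
          simp only [Cardinal.mk_nat, Cardinal.lift_aleph0, Cardinal.lift_uzero,
            Cardinal.lift_id]
          have hin : #(IndexC.{u} → Option (S × ℕ)) ≤ (2 ^ continuum.{u}) ^ continuum.{u} := by
            rw [mk_arrow]
            simp only [Cardinal.lift_id, mk_IndexC]
            exact power_le_power_right hO
          calc #(IndexC.{u} → Option (S × ℕ)) ^ (ℵ₀ : Cardinal.{u})
              ≤ ((2 ^ continuum.{u}) ^ continuum.{u}) ^ (ℵ₀ : Cardinal.{u}) :=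
                power_le_power_right hin
            _ = 2 ^ (continuum.{u} * (continuum.{u} * ℵ₀)) := by
                rw [← power_mul, ← power_mul]
            _ = 2 ^ continuum.{u} := by
                rw [mul_eq_left aleph0_le_continuum aleph0_le_continuum aleph0_ne_zero,
                  mul_eq_self aleph0_le_continuum]
  calc #(stepH b S) ≤ #S + #(witH b '' {g | GoodH b S g} : Set X) := mk_union_le _ _
    _ ≤ 2 ^ continuum.{u} + 2 ^ continuum.{u} := add_le_add hS h2
    _ = 2 ^ continuum.{u} := add_eq_self haleph

end HJ

theorem hj_bound {X : Type u} [TopologicalSpace X] [T2Space X] [FirstCountableTopology X]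
    (hc : ∀ 𝒰 : Set (Set X), IsCellularFamily 𝒰 → #𝒰 ≤ continuum.{u}) :
    #X ≤ 2 ^ continuum.{u} := by
  classical
  rcases isEmpty_or_nonempty X with hX | hX
  · rw [mk_eq_zero X]; exact zero_le
  obtain ⟨b, hb⟩ := exists_basic X
  have haleph : (ℵ₀ : Cardinal.{u}) ≤ 2 ^ continuum.{u} :=
    aleph0_le_continuum.trans (cantor continuum.{u}).le
  set o : Ordinal.{u} := (Order.succ continuum.{u}).ord with ho
  have hocard : o.card = Order.succ continuum.{u} := card_ord _
  have horeg : (Order.succ continuum.{u}).IsRegular := isRegular_succ aleph0_le_continuum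
  have hocof : o.cof = Order.succ continuum.{u} := horeg.cof_eq
  have hsucc_le : Order.succ continuum.{u} ≤ 2 ^ continuum.{u} :=
    Order.succ_le_of_lt (cantor continuum.{u})
  haveI : Nonempty o.ToType := by
    rw [Ordinal.nonempty_toType_iff]
    intro h
    have h2 : Order.succ continuum.{u} = 0 := by rw [← hocard, h, Ordinal.card_zero]
    have h3 : continuum.{u} < Order.succ continuum.{u} := Order.lt_succ _
    rw [h2] at h3
    exact (lt_irrefl _ (h3.trans_le zero_le))
  set F : o.ToType → Set X := myChain o (stepH b) with hF
  have hFcard : ∀ i, #(F i) ≤ 2 ^ continuum.{u} :=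
    myChain_card o (stepH b) _ haleph (by rw [hocard]; exact hsucc_le) (stepH_card b)
  have hFmono : ∀ {j i : o.ToType}, j < i → F j ⊆ F i :=
    fun h => myChain_mono o (stepH b) (subset_stepH b) h
  set A : Set X := ⋃ i, F i with hA
  -- main claim : A = univ
  have hXA : ∀ q : X, q ∈ A := by
    by_contra hq
    push_neg at hq
    obtain ⟨q, hqA⟩ := hq
    -- separation data
    have hsep : ∀ x : A, ∃ n m : ℕ, b (x : X) m ∩ b q n = ∅ := by
      intro x
      have hxq : (x : X) ≠ q := fun h => hqA (h ▸ x.2)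
      obtain ⟨P, Q, hP, hQ, hxP, hqQ, hPQ⟩ := t2_separation hxq
      obtain ⟨m, hm⟩ := (hb (x : X)).2 P (hP.mem_nhds hxP)
      obtain ⟨n, hn⟩ := (hb q).2 Q (hQ.mem_nhds hqQ)
      refine ⟨n, m, ?_⟩
      rw [eq_empty_iff_forall_notMem]
      rintro w ⟨hw1, hw2⟩
      exact hPQ.ne_of_mem (hm hw1) (hn hw2) rfl
    choose nx mx hdisj using hsep
    -- per n, shrink the family
    have hshr : ∀ n : ℕ, ∃ s : Set {x : A // nx x = n}, #s ≤ continuum.{u} ∧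
        (⋃ y : {x : A // nx x = n}, b ((y : A) : X) (mx (y : A))) ⊆
          closure (⋃ y ∈ s, b ((y : A) : X) (mx (y : A))) := by
      intro n
      exact shrink_lemma hc (fun y : {x : A // nx x = n} => b ((y : A) : X) (mx (y : A)))
        (fun y => ((hb _).1 _).1)
    choose s hscard hsclos using hshr
    -- embed each s n into IndexC
    have hemb : ∀ n : ℕ, ∃ φ : (s n) → IndexC.{u}, Function.Injective φ := by
      intro n
      have : #(s n) ≤ #(IndexC.{u}) := by rw [mk_IndexC]; exact hscard n
      obtain ⟨φ⟩ := Cardinal.le_def _ _ |>.1 this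
      exact ⟨φ, φ.injective⟩
    choose φ hφ using hemb
    -- the test function
    set g : ℕ → IndexC.{u} → Option (X × ℕ) := fun n c =>
      if h : ∃ y : (s n), φ n y = c then
        some ((((h.choose : {x : A // nx x = n}) : A) : X), mx ((h.choose : _) : A))
      else none with hg
    have husets : ∀ n, usetsH b g n =
        ⋃ y ∈ s n, b ((y : A) : X) (mx (y : A)) := by
      intro n
      apply Subset.antisymm
      · refine iUnion_subset fun c => ?_
        by_cases h : ∃ y : (s n), φ n y = c
        · intro z hz
          simp only [hg, dif_pos h, Option.elim] at hz
          exact mem_biUnion (h.choose).2 hz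
        · intro z hz
          simp only [hg, dif_neg h, Option.elim] at hz
          exact hz.elim
      · refine iUnion₂_subset fun y hy => ?_
        intro z hz
        refine mem_iUnion.2 ⟨φ n ⟨y, hy⟩, ?_⟩
        have hex : ∃ y' : (s n), φ n y' = φ n ⟨y, hy⟩ := ⟨⟨y, hy⟩, rfl⟩
        have hch : hex.choose = ⟨y, hy⟩ := hφ n hex.choose_spec
        simp only [hg, dif_pos hex, Option.elim, hch]
        exact hz
    -- q avoids all the closures
    have hqavoid : ∀ n, q ∉ closure (usetsH b g n) := by
      intro n hqcl
      obtain ⟨z, hz1, hz2⟩ := (mem_closure_iff.1 hqcl) (b q n) ((hb q).1 n).1 ((hb q).1 n).2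
      rw [husets n] at hz2
      obtain ⟨y, hy, hzy⟩ := by simpa only [mem_iUnion, exists_prop] using hz2
      have hyn : nx (y : A) = n := y.2
      have := hdisj (y : A)
      rw [hyn] at this
      rw [eq_empty_iff_forall_notMem] at this
      exact this z ⟨hzy, hz1⟩
    -- stages
    have hstages : ∀ ξ : Σ n : ℕ, (s n), ∃ i, (((ξ.2 : {x : A // nx x = ξ.1}) : A) : X) ∈ F i :=
      fun ξ => mem_iUnion.1 ((ξ.2 : {x : A // nx x = ξ.1}) : A).2
    choose j hj using hstages
    have hrangesmall : #(range j) < o.cof := by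
      rw [hocof]
      refine lt_of_le_of_lt mk_range_le ?_
      refine lt_of_le_of_lt ?_ (Order.lt_succ continuum.{u})
      rw [Cardinal.mk_sigma]
      calc (Cardinal.sum fun n => #(s n)) ≤ Cardinal.sum fun _ : ℕ => continuum.{u} :=
            Cardinal.sum_le_sum _ _ (fun n => hscard n)
        _ = ℵ₀ * continuum.{u} := by
            rw [Cardinal.sum_const]
            simp [Cardinal.lift_id, Cardinal.lift_aleph0, Cardinal.lift_uzero]
        _ = continuum.{u} := by
            rw [mul_comm, mul_eq_left aleph0_le_continuum aleph0_le_continuum aleph0_ne_zero]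
    obtain ⟨i, hi⟩ := exists_gt_of_small o (range j) hrangesmall
    -- the Good instance
    have hGood : GoodH b (⋃ k : {k : o.ToType // k < i}, F k) g := by
      constructor
      · intro n c p hp
        by_cases h : ∃ y : (s n), φ n y = c
        · rw [hg] at hp
          simp only [dif_pos h] at hp
          have hpair := Option.some_injective _ hp
          rw [← hpair]
          exact mem_iUnion.2 ⟨⟨j ⟨n, h.choose⟩, hi _ (mem_range_self _)⟩, hj ⟨n, h.choose⟩⟩
        · rw [hg] at hp
          simp only [dif_neg h] at hp
          exact absurd hp (by simp)
      · refine ⟨q, ?_⟩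
        rw [mem_compl_iff, mem_iUnion]
        rintro ⟨n, hn⟩
        exact hqavoid n hn
    have hwitF : witH b g ∈ F i := by
      rw [hF, myChain_eq]
      exact Or.inr ⟨g, hGood, rfl⟩
    have hwitA : witH b g ∈ A := mem_iUnion.2 ⟨i, hwitF⟩
    -- but A is covered by the closures
    have hAcov : A ⊆ ⋃ n, closure (usetsH b g n) := by
      intro a ha
      refine mem_iUnion.2 ⟨nx ⟨a, ha⟩, ?_⟩
      rw [husets]
      refine hsclos (nx ⟨a, ha⟩) ?_
      exact mem_iUnion.2 ⟨⟨⟨a, ha⟩, rfl⟩, ((hb a).1 _).2⟩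
    exact (witH_mem b g hGood.2) (hAcov hwitA)
  have hcard : #A ≤ 2 ^ continuum.{u} := by
    calc #A ≤ #(o.ToType) * ⨆ i, #(F i) := mk_iUnion_le _
      _ ≤ (2 ^ continuum.{u}) * (2 ^ continuum.{u}) :=
          mul_le_mul' (by rw [mk_toType, hocard]; exact hsucc_le) (ciSup_le' hFcard)
      _ = 2 ^ continuum.{u} := mul_eq_self haleph
  have : #(univ : Set X) ≤ 2 ^ continuum.{u} := by
    refine le_trans (mk_le_mk_of_subset ?_) hcard
    intro x _; exact hXA x
  rwa [mk_univ] at this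

/-- every Hausdorff cellular-Lindelöf first-countable space has
cardinality at most `2^𝔠`. -/
theorem stmt10 {X : Type u} [TopologicalSpace X] [T2Space X]
    [FirstCountableTopology X] (hCL : CellularLindelof X) :
    #X ≤ 2 ^ Cardinal.continuum := by
  classical
  have hc : ∀ 𝒰 : Set (Set X), IsCellularFamily 𝒰 → #𝒰 ≤ continuum.{u} := by
    intro 𝒰 hU
    obtain ⟨L, hL, hmeets⟩ := hCL 𝒰 hU
    have hfex : ∀ U : 𝒰, ∃ z, z ∈ (U : Set X) ∩ L := fun U => hmeets U U.2
    choose f hf using hfex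
    have hfinj : Function.Injective (fun U : 𝒰 => (⟨f U, (hf U).2⟩ : L)) := by
      intro U U' hUU'
      by_contra hne
      have hUne : (U : Set X) ≠ (U' : Set X) := fun h => hne (Subtype.ext h)
      have hdisj := hU.2 U.2 U'.2 hUne
      have hfval : f U = f U' := congrArg Subtype.val hUU'
      have hempty : (U : Set X) ∩ (U' : Set X) = ∅ := disjoint_iff_inter_eq_empty.1 hdisj
      exact (eq_empty_iff_forall_notMem.1 hempty) (f U) ⟨(hf U).1, hfval ▸ (hf U').1⟩
    calc #𝒰 ≤ #L := mk_le_of_injective hfinj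
      _ ≤ continuum.{u} := lindelof_card_le_continuum hL
  exact hj_bound hc
end
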